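/- arXiv:2203.07898 — 6 statements merged into one kernel-verified Lean document; each statement's English description precedes it below -/
import Mathlib

section
/- For all curves π = (π₁,…,π_n) and σ = (σ₁,…,σ_m) in ℝ^d and all translations τ, τ' ∈ ℝ^d, |d_DTW(π, σ+τ) − d_DTW(π, σ+τ')| ≤ (n+m−1)·‖τ − τ'‖; that is, the function τ ↦ d_DTW(π, σ+τ) is (n+m−1)-Lipschitz with respect to the norm ‖·‖. -/
open Finset

/-- A traversal of two curves of lengths `n` and `m` (1-indexed): a nonempty list of
index pairs starting at `(1,1)`, ending at `(n,m)`, where each step increases the first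
index, the second index, or both, by one. -/
def IsTraversal (n m : ℕ) (T : List (ℕ × ℕ)) : Prop :=
  T.head? = some (1, 1) ∧ T.getLast? = some (n, m) ∧
  ∀ ℓ : ℕ, ℓ + 1 < T.length →
    T.getD (ℓ + 1) (0, 0) = ((T.getD ℓ (0, 0)).1 + 1, (T.getD ℓ (0, 0)).2) ∨
    T.getD (ℓ + 1) (0, 0) = ((T.getD ℓ (0, 0)).1, (T.getD ℓ (0, 0)).2 + 1) ∨
    T.getD (ℓ + 1) (0, 0) = ((T.getD ℓ (0, 0)).1 + 1, (T.getD ℓ (0, 0)).2 + 1)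

/-- The dynamic time warping distance of two curves `π = (π 1, …, π n)` and
`σ = (σ 1, …, σ m)`: the minimum, over all traversals, of the sum of the distances
of the paired points. -/
noncomputable def dtw {E : Type*} [NormedAddCommGroup E] (n m : ℕ) (π σ : ℕ → E) : ℝ :=
  sInf {c : ℝ | ∃ T : List (ℕ × ℕ), IsTraversal n m T ∧
    (T.map fun p => ‖π p.1 - σ p.2‖).sum = c}

private lemma listsum_abs_sub_le (T : List (ℕ × ℕ)) (f g : ℕ × ℕ → ℝ) (c : ℝ)
    (h : ∀ p, |f p - g p| ≤ c) :
    |(T.map f).sum - (T.map g).sum| ≤ (T.length : ℝ) * c := by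
  induction T with
  | nil => simp
  | cons p t ih =>
    simp only [List.map_cons, List.sum_cons, List.length_cons]
    calc |f p + (t.map f).sum - (g p + (t.map g).sum)|
        ≤ |f p - g p| + |(t.map f).sum - (t.map g).sum| := by
          have h2 := abs_add_le (f p - g p) ((t.map f).sum - (t.map g).sum)
          calc |f p + (t.map f).sum - (g p + (t.map g).sum)|
              = |(f p - g p) + ((t.map f).sum - (t.map g).sum)| := by ring_nf
            _ ≤ _ := h2
      _ ≤ c + (t.length : ℝ) * c := add_le_add (h p) ih
      _ = ((t.length : ℝ) + 1) * c := by ring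
      _ = (((t.length + 1 : ℕ)) : ℝ) * c := by push_cast; ring

private lemma traversal_mono {n m : ℕ} {T : List (ℕ × ℕ)} (h : IsTraversal n m T) :
    ∀ ℓ, ℓ < T.length → ℓ + 2 ≤ (T.getD ℓ (0, 0)).1 + (T.getD ℓ (0, 0)).2 := by
  obtain ⟨h1, _, h3⟩ := h
  intro ℓ
  induction ℓ with
  | zero =>
    intro _
    cases T with
    | nil => simp at h1
    | cons a t =>
      simp only [List.head?_cons, Option.some.injEq] at h1
      simp [h1]
  | succ k ih =>
    intro hk
    have hk' : k < T.length := by omega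
    have hmk := ih hk'
    rcases h3 k hk with he | he | he <;> rw [he] <;> dsimp only <;> omega

private lemma traversal_length_le {n m : ℕ} {T : List (ℕ × ℕ)} (h : IsTraversal n m T) :
    T.length ≤ n + m - 1 := by
  have hne : T ≠ [] := by
    intro he
    rw [he] at h
    simp [IsTraversal] at h
  have hL : 0 < T.length := List.length_pos_iff.mpr hne
  have hlast : T.getD (T.length - 1) (0, 0) = (n, m) := by
    have h2 := h.2.1
    rw [List.getLast?_eq_getElem?] at h2
    rw [List.getD_eq_getElem?_getD, h2]
    rfl
  have hmk := traversal_mono h (T.length - 1) (by omega)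
  rw [hlast] at hmk
  simp at hmk
  omega

private lemma exists_traversal (n m : ℕ) (hn : 1 ≤ n) (hm : 1 ≤ m) :
    ∃ T : List (ℕ × ℕ), IsTraversal n m T := by
  set f : ℕ → ℕ × ℕ := fun ℓ => if ℓ < n then (ℓ + 1, 1) else (n, ℓ - n + 2) with hf
  refine ⟨(List.range (n + m - 1)).map f, ?_, ?_, ?_⟩
  · rw [List.head?_eq_getElem?, List.getElem?_map, List.getElem?_range (by omega)]
    simp only [hf, Option.map_some]
    rw [if_pos (by omega : 0 < n)]
  · rw [List.getLast?_eq_getElem?, List.length_map, List.length_range,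
      List.getElem?_map, List.getElem?_range (by omega : n + m - 1 - 1 < n + m - 1)]
    simp only [hf, Option.map_some]
    split_ifs with h1
    · have hm1 : m = 1 := by omega
      subst hm1
      congr 1
      ext <;> simp <;> omega
    · congr 1
      ext <;> simp <;> omega
  · intro ℓ hℓ
    rw [List.length_map, List.length_range] at hℓ
    have hg : ∀ k, k < n + m - 1 →
        (((List.range (n + m - 1)).map f).getD k (0, 0)) = f k := by
      intro k hk
      rw [List.getD_eq_getElem?_getD, List.getElem?_map, List.getElem?_range hk]
      rfl
    rw [hg (ℓ + 1) hℓ, hg ℓ (by omega)]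
    by_cases h1 : ℓ + 1 < n
    · left
      simp only [hf]
      rw [if_pos h1, if_pos (by omega : ℓ < n)]
    · by_cases h2 : ℓ < n
      · right; left
        simp only [hf]
        rw [if_neg h1, if_pos h2]
        have : ℓ + 1 = n := by omega
        ext <;> simp <;> omega
      · right; left
        simp only [hf]
        rw [if_neg h1, if_neg h2]
        ext <;> simp <;> omega

private lemma dtw_le_translate {E : Type*} [NormedAddCommGroup E] (n m : ℕ)
    (hn : 1 ≤ n) (hm : 1 ≤ m) (π σ : ℕ → E) (τ τ' : E) :
    dtw n m π (fun j => σ j + τ) ≤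
      dtw n m π (fun j => σ j + τ') + ((n : ℝ) + m - 1) * ‖τ - τ'‖ := by
  set S : Set ℝ := {c : ℝ | ∃ T : List (ℕ × ℕ), IsTraversal n m T ∧
    (T.map fun p => ‖π p.1 - (σ p.2 + τ)‖).sum = c} with hS
  set S' : Set ℝ := {c : ℝ | ∃ T : List (ℕ × ℕ), IsTraversal n m T ∧
    (T.map fun p => ‖π p.1 - (σ p.2 + τ')‖).sum = c} with hS'
  have hbdd : BddBelow S := by
    refine ⟨0, fun c hc => ?_⟩
    obtain ⟨T, _, rfl⟩ := hc
    exact List.sum_nonneg (by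
      intro x hx
      obtain ⟨p, _, rfl⟩ := List.mem_map.mp hx
      exact norm_nonneg _)
  have hne' : S'.Nonempty := by
    obtain ⟨T, hT⟩ := exists_traversal n m hn hm
    exact ⟨_, T, hT, rfl⟩
  have hkey : ∀ c ∈ S', sInf S ≤ c + ((n : ℝ) + m - 1) * ‖τ - τ'‖ := by
    rintro c ⟨T, hT, rfl⟩
    have hmem : (T.map fun p => ‖π p.1 - (σ p.2 + τ)‖).sum ∈ S := ⟨T, hT, rfl⟩
    have h1 : sInf S ≤ (T.map fun p => ‖π p.1 - (σ p.2 + τ)‖).sum :=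
      csInf_le hbdd hmem
    have h2 : |(T.map fun p => ‖π p.1 - (σ p.2 + τ)‖).sum -
        (T.map fun p => ‖π p.1 - (σ p.2 + τ')‖).sum| ≤ (T.length : ℝ) * ‖τ - τ'‖ := by
      apply listsum_abs_sub_le
      intro p
      calc |‖π p.1 - (σ p.2 + τ)‖ - ‖π p.1 - (σ p.2 + τ')‖|
          ≤ ‖(π p.1 - (σ p.2 + τ)) - (π p.1 - (σ p.2 + τ'))‖ := abs_norm_sub_norm_le _ _
        _ = ‖τ' - τ‖ := by congr 1; abel
        _ = ‖τ - τ'‖ := norm_sub_rev _ _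
    have h3 : (T.length : ℝ) * ‖τ - τ'‖ ≤ ((n : ℝ) + m - 1) * ‖τ - τ'‖ := by
      apply mul_le_mul_of_nonneg_right _ (norm_nonneg _)
      have := traversal_length_le hT
      have hcast : (T.length : ℝ) ≤ ((n + m - 1 : ℕ) : ℝ) := Nat.cast_le.mpr this
      calc (T.length : ℝ) ≤ ((n + m - 1 : ℕ) : ℝ) := hcast
        _ = (n : ℝ) + m - 1 := by
          have : (1 : ℕ) ≤ n + m := by omega
          push_cast [Nat.cast_sub this]
          ring
    have h4 := abs_sub_le_iff.mp h2
    linarith [h4.1]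
  have : sInf S - ((n : ℝ) + m - 1) * ‖τ - τ'‖ ≤ sInf S' := by
    apply le_csInf hne'
    intro c hc
    linarith [hkey c hc]
  have hdtw : dtw n m π (fun j => σ j + τ) = sInf S := rfl
  have hdtw' : dtw n m π (fun j => σ j + τ') = sInf S' := rfl
  rw [hdtw, hdtw']
  linarith

/-- The map `τ ↦ d_DTW(π, σ + τ)` is `(n + m - 1)`-Lipschitz. -/
theorem dtw_translate_lipschitz {E : Type*} [NormedAddCommGroup E] (n m : ℕ)
    (hn : 1 ≤ n) (hm : 1 ≤ m) (π σ : ℕ → E) (τ τ' : E) :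
    |dtw n m π (fun j => σ j + τ) - dtw n m π (fun j => σ j + τ')| ≤
      ((n : ℝ) + m - 1) * ‖τ - τ'‖ := by
  have h1 := dtw_le_translate n m hn hm π σ τ τ'
  have h2 := dtw_le_translate n m hn hm π σ τ' τ
  rw [norm_sub_rev] at h2
  rw [abs_sub_le_iff]
  constructor <;> linarith
end

section
/- Let π = (π₁,…,π_n) and σ = (σ₁,…,σ_m) be curves in ℝ^d with m ≤ n, let δ > 0 and τ ∈ ℝ^d, and suppose d_DTW(π, σ+τ) ≤ δ. Then the number of distinct index pairs (i,j) ∈ [n]×[m] with ‖(π_i − σ_j) − τ‖ ≤ 2δ/n is at least n/2. -/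
open Finset

lemma trav_mono (n m : ℕ) (T : List (ℕ × ℕ)) (hT : IsTraversal n m T) :
    ∀ ℓ' < T.length, ∀ ℓ ≤ ℓ',
      (T.getD ℓ (0,0)).1 ≤ (T.getD ℓ' (0,0)).1 ∧
      (T.getD ℓ (0,0)).2 ≤ (T.getD ℓ' (0,0)).2 ∧
      (T.getD ℓ' (0,0)).1 ≤ (T.getD ℓ (0,0)).1 + (ℓ' - ℓ) ∧
      (T.getD ℓ (0,0)).1 + (T.getD ℓ (0,0)).2 + (ℓ' - ℓ)
        ≤ (T.getD ℓ' (0,0)).1 + (T.getD ℓ' (0,0)).2 := by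
  intro ℓ'
  induction ℓ' with
  | zero => intro _ ℓ hℓ; interval_cases ℓ; omega
  | succ k ih =>
    intro hk ℓ hℓ
    rcases Nat.eq_or_lt_of_le hℓ with rfl | hlt
    · omega
    have hℓk : ℓ ≤ k := by omega
    have hkl : k < T.length := by omega
    have IH := ih hkl ℓ hℓk
    have step := hT.2.2 k hk
    rcases step with h | h | h <;> rw [h] <;> dsimp only <;> omega

lemma trav_facts (n m : ℕ) (T : List (ℕ × ℕ)) (hT : IsTraversal n m T) :
    n ≤ T.length ∧ T.Nodup ∧
      ∀ p ∈ T, 1 ≤ p.1 ∧ p.1 ≤ n ∧ 1 ≤ p.2 ∧ p.2 ≤ m := by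
  obtain ⟨hhead, hlast, hstep⟩ := hT
  have hTne : T ≠ [] := by rintro rfl; simp at hhead
  have hL : 1 ≤ T.length := List.length_pos_iff.2 hTne
  have h0 : T.getD 0 (0,0) = (1,1) := by
    cases T with
    | nil => simp at hhead
    | cons p t => simpa using hhead
  have hlast' : T.getD (T.length - 1) (0,0) = (n, m) := by
    have h1 : T.length - 1 < T.length := by omega
    rw [List.getD_eq_getElem T (0,0) h1]
    have := List.getLast?_eq_getElem? (l := T)
    rw [hlast, List.getElem?_eq_getElem h1] at this
    exact (Option.some_injective _ this).symm
  have mono := trav_mono n m T ⟨hhead, hlast, hstep⟩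
  have hlen : n ≤ T.length := by
    have := mono (T.length - 1) (by omega) 0 (by omega)
    rw [h0, hlast'] at this
    omega
  refine ⟨hlen, ?_, ?_⟩
  · rw [List.nodup_iff_injective_get]
    intro i j hij
    by_contra hne
    have hne' : (i : ℕ) ≠ (j : ℕ) := fun hc => hne (Fin.ext hc)
    have key : ∀ a b : Fin T.length, (a : ℕ) < (b : ℕ) → T.get a ≠ T.get b := by
      intro a b hab heq
      have := mono b b.2 a (le_of_lt hab)
      rw [List.getD_eq_getElem T (0,0) a.2, List.getD_eq_getElem T (0,0) b.2] at this
      simp only [List.get_eq_getElem] at heq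
      rw [heq] at this
      omega
    rcases Nat.lt_or_ge (i : ℕ) (j : ℕ) with hlt | hge
    · exact key i j hlt hij
    · exact key j i (by omega) hij.symm
  · intro p hp
    obtain ⟨i, hi, rfl⟩ := List.mem_iff_getElem.1 hp
    have h1 := mono i hi 0 (by omega)
    have h2 := mono (T.length - 1) (by omega) i (by omega)
    rw [h0] at h1
    rw [hlast'] at h2
    rw [List.getD_eq_getElem T (0,0) hi] at h1 h2
    omega

lemma trav_exists (n m : ℕ) (hm : 1 ≤ m) (hmn : m ≤ n) :
    IsTraversal n m ((List.range n).map fun i => (i + 1, min (i + 1) m)) := by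
  have hn : 1 ≤ n := hm.trans hmn
  set T := (List.range n).map fun i => (i + 1, min (i + 1) m) with hTdef
  have hlen : T.length = n := by simp [hTdef]
  have hget : ∀ i (hi : i < n), T.getD i (0,0) = (i + 1, min (i + 1) m) := by
    intro i hi
    rw [List.getD_eq_getElem T (0,0) (by omega)]
    simp [hTdef]
  refine ⟨?_, ?_, ?_⟩
  · obtain ⟨k, rfl⟩ := Nat.exists_eq_add_of_le hn
    rw [hTdef]
    rw [show 1 + k = k + 1 by omega, List.range_succ_eq_map]
    simp [Nat.min_eq_left hm]
  · have h1 : T.length - 1 < T.length := by omega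
    rw [List.getLast?_eq_getElem?, List.getElem?_eq_getElem h1]
    have := hget (T.length - 1) (by omega)
    rw [List.getD_eq_getElem T (0,0) h1] at this
    rw [this, hlen]
    rw [show n - 1 + 1 = n by omega, Nat.min_eq_right hmn]
  · intro ℓ hℓ
    rw [hlen] at hℓ
    rw [hget ℓ (by omega), hget (ℓ+1) hℓ]
    rcases Nat.lt_or_ge (ℓ + 1) m with hc | hc
    · right; right
      rw [Nat.min_eq_left (by omega : ℓ + 1 ≤ m), Nat.min_eq_left (by omega : ℓ + 1 + 1 ≤ m)]
    · left
      rw [Nat.min_eq_right hc, Nat.min_eq_right (by omega : m ≤ ℓ + 1 + 1)]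

open scoped Classical in
/-- If `m ≤ n`, `δ > 0` and `d_DTW(π, σ + τ) ≤ δ`, then at least `n/2` distinct index pairs
`(i, j) ∈ [n] × [m]` satisfy `‖(π_i - σ_j) - τ‖ ≤ 2δ/n`. -/
theorem many_close_pairs {E : Type*} [NormedAddCommGroup E] (n m : ℕ)
    (hm : 1 ≤ m) (hmn : m ≤ n) (π σ : ℕ → E) (δ : ℝ) (hδ : 0 < δ) (τ : E)
    (h : dtw n m π (fun j => σ j + τ) ≤ δ) :
    (n : ℝ) / 2 ≤
      (((Finset.Icc 1 n ×ˢ Finset.Icc 1 m).filter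
        (fun p : ℕ × ℕ => ‖(π p.1 - σ p.2) - τ‖ ≤ 2 * δ / n)).card : ℝ) := by
  have hn : 1 ≤ n := hm.trans hmn
  have hn0 : (0:ℝ) < n := by exact_mod_cast Nat.pos_of_ne_zero (by omega)
  set σ' : ℕ → E := fun j => σ j + τ with hσ'
  set S : Set ℝ := {c : ℝ | ∃ T : List (ℕ × ℕ), IsTraversal n m T ∧
    (T.map fun p => ‖π p.1 - σ' p.2‖).sum = c} with hSdef
  have hdtw : dtw n m π σ' = sInf S := rfl
  have hne : S.Nonempty := ⟨_, _, trav_exists n m hm hmn, rfl⟩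
  set ε : ℝ := (2*δ/n) * (((n/2 : ℕ) : ℝ) + 1 - (n:ℝ)/2) with hε
  have hfrac : (0:ℝ) < ((n/2 : ℕ) : ℝ) + 1 - (n:ℝ)/2 := by
    have h1 : n ≤ 2 * (n/2) + 1 := by omega
    have h2 : (n:ℝ) ≤ 2 * ((n/2 : ℕ):ℝ) + 1 := by exact_mod_cast h1
    linarith
  have hεpos : 0 < ε := mul_pos (by positivity) hfrac
  obtain ⟨c, hcS, hclt⟩ := Real.lt_sInf_add_pos hne hεpos
  obtain ⟨T, hT, hc⟩ := hcS
  rw [hdtw] at h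
  have hclt' : c < δ + ε := by linarith
  obtain ⟨hlen, hnd, hmem⟩ := trav_facts n m T hT
  set f : ℕ × ℕ → ℝ := fun p => ‖π p.1 - σ' p.2‖ with hf
  set P : ℕ × ℕ → Prop := fun p : ℕ × ℕ => ‖(π p.1 - σ p.2) - τ‖ ≤ 2 * δ / n with hP
  have hfP : ∀ p, ¬ P p → 2*δ/n < f p := by
    intro p hp
    have heq : f p = ‖(π p.1 - σ p.2) - τ‖ := by
      rw [hf, hσ']; dsimp; rw [sub_add_eq_sub_sub]
    rw [heq]
    exact lt_of_not_ge hp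
  set B := T.toFinset.filter (fun p => ¬ P p) with hB
  set G := T.toFinset.filter (fun p => P p) with hG
  have hcard : G.card + B.card = T.length := by
    rw [hG, hB, Finset.card_filter_add_card_filter_not,
      List.toFinset_card_of_nodup hnd]
  have hsum1 : (B.card : ℝ) * (2*δ/n) ≤ ∑ p ∈ B, f p := by
    have := Finset.card_nsmul_le_sum B f (2*δ/n)
      (fun p hp => le_of_lt (hfP p (Finset.mem_filter.1 hp).2))
    simpa [nsmul_eq_mul] using this
  have hsum2 : ∑ p ∈ B, f p ≤ ∑ p ∈ T.toFinset, f p :=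
    Finset.sum_le_sum_of_subset_of_nonneg (Finset.filter_subset _ _)
      (fun p _ _ => norm_nonneg _)
  have hsum3 : ∑ p ∈ T.toFinset, f p = c := by rw [List.sum_toFinset f hnd, hc]
  have hBbound : (B.card : ℝ) * (2*δ/n) < δ + ε := by linarith
  have hpos : (0:ℝ) < 2*δ/n := by positivity
  have h2' : δ + ε = (((n/2 : ℕ):ℝ) + 1) * (2*δ/n) := by
    rw [hε]; field_simp; ring
  have hBn : B.card ≤ n / 2 := by
    rw [h2'] at hBbound
    have := lt_of_mul_lt_mul_right hBbound hpos.le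
    have : B.card < n/2 + 1 := by exact_mod_cast this
    omega
  have hGsub : G ⊆ (Finset.Icc 1 n ×ˢ Finset.Icc 1 m).filter
      (fun p : ℕ × ℕ => ‖(π p.1 - σ p.2) - τ‖ ≤ 2 * δ / n) := by
    intro p hp
    rw [hG, Finset.mem_filter] at hp
    obtain ⟨hpT, hpP⟩ := hp
    rw [Finset.mem_filter, Finset.mem_product, Finset.mem_Icc, Finset.mem_Icc]
    have hb := hmem p (List.mem_toFinset.1 hpT)
    exact ⟨⟨⟨hb.1, hb.2.1⟩, ⟨hb.2.2.1, hb.2.2.2⟩⟩, hpP⟩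
  have hGcard : n - n/2 ≤ G.card := by omega
  have hhalf : ((n/2 : ℕ):ℝ) ≤ (n:ℝ)/2 := by
    have h1 : 2 * (n/2) ≤ n := by omega
    have h2 : 2 * ((n/2:ℕ):ℝ) ≤ (n:ℝ) := by exact_mod_cast h1
    linarith
  calc (n:ℝ)/2 ≤ ((n - n/2 : ℕ) : ℝ) := by
        rw [Nat.cast_sub (Nat.div_le_self n 2)]
        linarith
    _ ≤ (G.card : ℝ) := by exact_mod_cast hGcard
    _ ≤ _ := by exact_mod_cast Finset.card_le_card hGsub
end

section
/- Let π = (π₁,…,π_n) and σ = (σ₁,…,σ_m) be curves in ℝ² with m ≤ n, and let δ > 0 and ε > 0. If there exists τ ∈ ℝ² with d_DTW(π, σ+τ) ≤ δ, then there exists a point q ∈ ℝ² both of whose coordinates are integer multiples of (ε·δ)/(4n) such that d_DTW(π, σ+q) ≤ (1+ε)·δ. -/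
open Finset

lemma traversal_len {n m : ℕ} {T : List (ℕ × ℕ)} (h : IsTraversal n m T) :
    T.length + 1 ≤ n + m := by
  obtain ⟨h1, h2, h3⟩ := h
  have hne : T ≠ [] := by rintro rfl; simp at h1
  have h0 : T.getD 0 (0,0) = (1,1) := by
    cases T with
    | nil => simp at h1
    | cons a l => simp_all
  have key : ∀ ℓ < T.length, ℓ + 2 ≤ (T.getD ℓ (0,0)).1 + (T.getD ℓ (0,0)).2 := by
    intro ℓ
    induction ℓ with
    | zero => intro _; rw [h0]; norm_num
    | succ k ih =>
      intro hk
      have hkl : k < T.length := by omega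
      have := ih (by omega)
      rcases h3 k hk with hc | hc | hc <;> rw [hc] <;> dsimp only <;> omega
  have hlast : T.getD (T.length - 1) (0,0) = (n, m) := by
    rw [List.getLast?_eq_getElem?] at h2
    have : T.getD (T.length - 1) (0,0) = (T[T.length - 1]?).getD (0,0) := by
      rw [List.getD_eq_getElem?_getD]
    rw [this, h2]
    rfl
  have hlen : 0 < T.length := List.length_pos_iff.mpr hne
  have := key (T.length - 1) (by omega)
  rw [hlast] at this
  simp at this
  omega

/-- If some translation `τ ∈ ℝ²` achieves `d_DTW(π, σ + τ) ≤ δ`, then there is a point `q`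
both of whose coordinates are integer multiples of `εδ/(4n)` with
`d_DTW(π, σ + q) ≤ (1 + ε)δ`. -/
theorem grid_point_good_translation (n m : ℕ) (hm : 1 ≤ m) (hmn : m ≤ n)
    (π σ : ℕ → EuclideanSpace ℝ (Fin 2)) (δ ε : ℝ) (hδ : 0 < δ) (hε : 0 < ε)
    (h : ∃ τ : EuclideanSpace ℝ (Fin 2), dtw n m π (fun j => σ j + τ) ≤ δ) :
    ∃ q : EuclideanSpace ℝ (Fin 2),
      (∃ k : ℤ, q 0 = (k : ℝ) * (ε * δ / (4 * n))) ∧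
      (∃ k : ℤ, q 1 = (k : ℝ) * (ε * δ / (4 * n))) ∧
      dtw n m π (fun j => σ j + q) ≤ (1 + ε) * δ := by
  obtain ⟨τ, hτ⟩ := h
  have hn : 1 ≤ n := le_trans hm hmn
  have hn0 : (0:ℝ) < n := by exact_mod_cast hn
  set g : ℝ := ε * δ / (4 * n) with hg
  have hg0 : 0 < g := by positivity
  have hbdd : ∀ σ' : ℕ → EuclideanSpace ℝ (Fin 2),
      BddBelow {c : ℝ | ∃ T : List (ℕ × ℕ), IsTraversal n m T ∧
        (T.map fun p => ‖π p.1 - σ' p.2‖).sum = c} := by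
    intro σ'
    refine ⟨0, ?_⟩
    rintro c ⟨T, _, rfl⟩
    apply List.sum_nonneg
    intro x hx
    simp only [List.mem_map] at hx
    obtain ⟨p, _, rfl⟩ := hx
    exact norm_nonneg _
  by_cases hT : ∃ T, IsTraversal n m T
  · obtain ⟨T₀, hT₀⟩ := hT
    set q : EuclideanSpace ℝ (Fin 2) := WithLp.toLp 2 (fun i => (round (τ i / g) : ℝ) * g) with hq
    refine ⟨q, ⟨round (τ 0 / g), rfl⟩, ⟨round (τ 1 / g), rfl⟩, ?_⟩
    -- bound ‖τ - q‖ ≤ g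
    have hb : ∀ i : Fin 2, ‖(τ - q) i‖ ≤ g / 2 := by
      intro i
      have he : (τ - q) i = τ i - (round (τ i / g) : ℝ) * g := by
        simp [hq]
      rw [he, Real.norm_eq_abs]
      have h1 : |τ i / g - round (τ i / g)| ≤ 1/2 := abs_sub_round (τ i / g)
      have h2 : τ i - (round (τ i / g) : ℝ) * g = (τ i / g - round (τ i / g)) * g := by
        field_simp
      rw [h2, abs_mul, abs_of_pos hg0]
      nlinarith
    have hnorm : ‖τ - q‖ ≤ g := by
      rw [EuclideanSpace.norm_eq]
      have hsum : ∑ i, ‖(τ - q) i‖ ^ 2 ≤ g ^ 2 := by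
        rw [Fin.sum_univ_two]
        have b0 := hb 0; have b1 := hb 1
        have n0 : (0:ℝ) ≤ ‖(τ - q) 0‖ := norm_nonneg _
        have n1 : (0:ℝ) ≤ ‖(τ - q) 1‖ := norm_nonneg _
        nlinarith
      calc Real.sqrt (∑ i, ‖(τ - q) i‖ ^ 2) ≤ Real.sqrt (g ^ 2) := Real.sqrt_le_sqrt hsum
        _ = g := by rw [Real.sqrt_sq hg0.le]
    -- cost comparison
    have hcost : ∀ T : List (ℕ × ℕ),
        (T.map fun p => ‖π p.1 - (σ p.2 + q)‖).sum ≤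
        (T.map fun p => ‖π p.1 - (σ p.2 + τ)‖).sum + T.length * ‖τ - q‖ := by
      intro T
      induction T with
      | nil => simp
      | cons a l ih =>
        simp only [List.map_cons, List.sum_cons, List.length_cons]
        have h1 : ‖π a.1 - (σ a.2 + q)‖ ≤ ‖π a.1 - (σ a.2 + τ)‖ + ‖τ - q‖ := by
          have he : π a.1 - (σ a.2 + q) = (π a.1 - (σ a.2 + τ)) + (τ - q) := by abel
          rw [he]; exact norm_add_le _ _
        push_cast
        nlinarith [ih]
    -- pick a near-optimal traversal
    have hne : {c : ℝ | ∃ T : List (ℕ × ℕ), IsTraversal n m T ∧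
        (T.map fun p => ‖π p.1 - (σ p.2 + τ)‖).sum = c}.Nonempty :=
      ⟨_, T₀, hT₀, rfl⟩
    have hlt : dtw n m π (fun j => σ j + τ) < δ + ε * δ / 4 := lt_of_le_of_lt hτ (by nlinarith)
    simp only [dtw] at hlt
    obtain ⟨c, hcS, hclt⟩ := (csInf_lt_iff (hbdd (fun j => σ j + τ)) hne).mp hlt
    obtain ⟨T, hTt, hcT⟩ := hcS
    -- final bound
    have hlen : (T.length : ℝ) ≤ 2 * n := by
      have := traversal_len hTt
      have : T.length ≤ 2 * n := by omega
      exact_mod_cast this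
    have hstep : (T.length : ℝ) * ‖τ - q‖ ≤ ε * δ / 2 := by
      have h1 : (T.length : ℝ) * ‖τ - q‖ ≤ (2 * n) * g := by
        apply mul_le_mul hlen hnorm (norm_nonneg _) (by positivity)
      have h2 : (2 * (n:ℝ)) * g = ε * δ / 2 := by
        rw [hg]; field_simp; ring
      linarith
    have hfinal : dtw n m π (fun j => σ j + q) ≤
        (T.map fun p => ‖π p.1 - (σ p.2 + q)‖).sum := by
      simp only [dtw]
      apply csInf_le (hbdd (fun j => σ j + q))
      exact ⟨T, hTt, rfl⟩
    have := hcost T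
    rw [hcT] at this
    nlinarith
  · have hempty : ∀ σ' : ℕ → EuclideanSpace ℝ (Fin 2),
        {c : ℝ | ∃ T : List (ℕ × ℕ), IsTraversal n m T ∧
          (T.map fun p => ‖π p.1 - σ' p.2‖).sum = c} = ∅ := by
      intro σ'
      ext c
      simp only [Set.mem_setOf_eq, Set.mem_empty_iff_false, iff_false]
      rintro ⟨T, hTt, -⟩
      exact hT ⟨T, hTt⟩
    refine ⟨0, ⟨0, by simp⟩, ⟨0, by simp⟩, ?_⟩
    simp only [dtw]
    have he2 : {c : ℝ | ∃ T : List (ℕ × ℕ), IsTraversal n m T ∧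
        (T.map fun p => ‖π p.1 - (σ p.2 + (0 : EuclideanSpace ℝ (Fin 2)))‖).sum = c} = ∅ :=
      hempty (fun j => σ j + 0)
    rw [he2, Real.sInf_empty]
    positivity
end

section
/- Let π = (π₁,…,π_n) and σ = (σ₁,…,σ_m) be curves in ℝ^d equipped with the L₁ norm, let T = ((i₁,j₁),…,(i_L,j_L)) be a fixed traversal, and let Q = ∏_{k=1}^{d} [x_k, x'_k] be an axis-parallel box such that for every i ∈ [n], j ∈ [m], k ∈ [d] the value π_i[k] − σ_j[k] does not lie in the open interval (x_k, x'_k). Then the function τ ↦ Σ_{ℓ=1}^{L} ‖π_{i_ℓ} − (σ_{j_ℓ} + τ)‖₁ is affine on Q. -/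
open Finset

/-- The `L₁` norm on `ℝ^d`. -/
def l1norm {d : ℕ} (x : Fin d → ℝ) : ℝ := ∑ k, |x k|

/-- The dynamic time warping distance, with respect to the `L₁` norm on `ℝ^d`, of two
curves `π = (π 1, …, π n)` and `σ = (σ 1, …, σ m)`: the minimum, over all traversals, of
the sum of the `L₁` distances of the paired points. -/
noncomputable def dtwL1 {d : ℕ} (n m : ℕ) (π σ : ℕ → Fin d → ℝ) : ℝ :=
  sInf {c : ℝ | ∃ T : List (ℕ × ℕ), IsTraversal n m T ∧
    (T.map fun p => l1norm (π p.1 - σ p.2)).sum = c}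

lemma list_sum_map_sum {α} (d : ℕ) (T : List α) (F : α → Fin d → ℝ) :
    (T.map fun p => ∑ k, F p k).sum = ∑ k, (T.map fun p => F p k).sum := by
  induction T with
  | nil => simp
  | cons a t ih => simp [ih, Finset.sum_add_distrib]

lemma list_sum_map_sub {α} (T : List α) (A B : α → ℝ) :
    (T.map fun p => A p - B p).sum = (T.map A).sum - (T.map B).sum := by
  induction T with
  | nil => simp
  | cons a t ih => simp [ih]; ring

/-- For a fixed traversal `T`, if for all `i ∈ [n]`, `j ∈ [m]` and coordinates `k` the
value `π_i[k] - σ_j[k]` does not lie in the open interval `(x_k, x'_k)`, then the cost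
`τ ↦ Σ_{(i,j) ∈ T} ‖π_i - (σ_j + τ)‖₁` is affine on the box `Q = ∏ₖ [x_k, x'_k]`. -/
theorem traversal_cost_affine_on_cell (d n m : ℕ) (π σ : ℕ → Fin d → ℝ)
    (T : List (ℕ × ℕ)) (hT : IsTraversal n m T)
    (x x' : Fin d → ℝ) (hxx : x ≤ x')
    (hgrid : ∀ i ∈ Finset.Icc 1 n, ∀ j ∈ Finset.Icc 1 m, ∀ k : Fin d,
      π i k - σ j k ∉ Set.Ioo (x k) (x' k)) :
    ∃ (g : (Fin d → ℝ) →ₗ[ℝ] ℝ) (c : ℝ),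
      ∀ τ ∈ Set.Icc x x',
        (T.map fun p => l1norm (π p.1 - (σ p.2 + τ))).sum = g τ + c := by
  obtain ⟨h1, h2, hstep⟩ := hT
  have hne : T ≠ [] := by intro h; rw [h] at h1; simp at h1
  have hlen : 0 < T.length := List.length_pos_iff.mpr hne
  have ha0 : T.getD 0 (0, 0) = (1, 1) := by
    rw [List.getD_eq_getElem?_getD, ← List.head?_eq_getElem?, h1]; rfl
  have halast : T.getD (T.length - 1) (0, 0) = (n, m) := by
    rw [List.getD_eq_getElem?_getD, ← List.getLast?_eq_getElem?, h2]; rfl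
  have hmono : ∀ ℓ t : ℕ, ℓ + t < T.length →
      (T.getD ℓ (0, 0)).1 ≤ (T.getD (ℓ + t) (0, 0)).1 ∧
      (T.getD ℓ (0, 0)).2 ≤ (T.getD (ℓ + t) (0, 0)).2 := by
    intro ℓ t
    induction t with
    | zero => simp
    | succ t ih =>
      intro h
      obtain ⟨ih1, ih2⟩ := ih (by omega)
      have hs := hstep (ℓ + t) (by omega)
      have he : ℓ + (t + 1) = ℓ + t + 1 := rfl
      rw [he]
      rcases hs with hc | hc | hc <;> rw [hc] <;> exact ⟨by dsimp only; omega, by dsimp only; omega⟩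
  have hbound : ∀ p ∈ T, p.1 ∈ Finset.Icc 1 n ∧ p.2 ∈ Finset.Icc 1 m := by
    intro p hp
    obtain ⟨ℓ, hℓ, hpe⟩ := List.mem_iff_getElem.mp hp
    have hgd : T.getD ℓ (0, 0) = p := by rw [List.getD_eq_getElem T _ hℓ]; exact hpe
    have hlow := hmono 0 ℓ (by omega)
    rw [ha0] at hlow
    simp only [Nat.zero_add] at hlow
    have hup := hmono ℓ (T.length - 1 - ℓ) (by omega)
    rw [show ℓ + (T.length - 1 - ℓ) = T.length - 1 by omega, halast] at hup
    rw [hgd] at hlow hup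
    simp only [Finset.mem_Icc]
    exact ⟨⟨hlow.1, hup.1⟩, ⟨hlow.2, hup.2⟩⟩
  set v : ℕ × ℕ → Fin d → ℝ := fun p k => π p.1 k - σ p.2 k with hv
  set ε : ℕ × ℕ → Fin d → ℝ := fun p k => if x' k ≤ v p k then 1 else -1 with hε
  refine ⟨∑ k : Fin d, (-((T.map fun p => ε p k).sum)) • LinearMap.proj k,
    ∑ k : Fin d, (T.map fun p => ε p k * v p k).sum, ?_⟩
  intro τ hτ
  have habs : ∀ p ∈ T, ∀ k : Fin d, |v p k - τ k| = ε p k * (v p k - τ k) := by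
    intro p hp k
    by_cases hc : x' k ≤ v p k
    · rw [hε]; simp only [hc, if_pos]
      rw [abs_of_nonneg (by have := hτ.2 k; simp only [hv] at hc ⊢; linarith), one_mul]
    · have hvx : v p k ≤ x k := by
        have hg := hgrid p.1 (hbound p hp).1 p.2 (hbound p hp).2 k
        simp only [Set.mem_Ioo, not_and_or, not_lt] at hg
        rcases hg with hg | hg
        · exact hg
        · exact absurd hg hc
      rw [hε]; simp only [hc, if_neg, if_false]
      rw [abs_of_nonpos (by have := hτ.1 k; linarith)]; ring
  have step1 : (T.map fun p => l1norm (π p.1 - (σ p.2 + τ))).sum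
      = (T.map fun p => ∑ k, ε p k * (v p k - τ k)).sum := by
    apply congrArg List.sum
    apply List.map_congr_left
    intro p hp
    unfold l1norm
    apply Finset.sum_congr rfl
    intro k _
    have he : (π p.1 - (σ p.2 + τ)) k = v p k - τ k := by
      simp [hv, Pi.sub_apply, Pi.add_apply]; ring
    rw [he, habs p hp k]
  rw [step1, list_sum_map_sum]
  have step2 : ∀ k : Fin d, (T.map fun p => ε p k * (v p k - τ k)).sum
      = (T.map fun p => ε p k * v p k).sum - τ k * (T.map fun p => ε p k).sum := by
    intro k
    have : (fun p => ε p k * (v p k - τ k)) = fun p => ε p k * v p k - τ k * ε p k := by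
      funext p; ring
    rw [this, list_sum_map_sub, List.sum_map_mul_left]
  simp only [step2]
  rw [Finset.sum_sub_distrib]
  simp only [LinearMap.sum_apply, LinearMap.smul_apply, LinearMap.proj_apply, smul_eq_mul]
  have hvv : ∀ kk : Fin d, (List.map (fun p => ε p kk * v p kk) T).sum
      = (List.map (fun p => ε p kk * π p.1 kk - ε p kk * σ p.2 kk) T).sum := by
    intro kk
    congr 1
    apply List.map_congr_left
    intro p _
    simp only [hv]
    ring
  simp only [hvv]
  have hneg : ∀ kk : Fin d, -(List.map (fun p => ε p kk) T).sum * τ kk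
      = -(τ kk * (List.map (fun p => ε p kk) T).sum) := fun kk => by ring
  simp only [hneg, Finset.sum_neg_distrib]
  ring
end

section
/- Fix p ∈ [1,∞) and equip ℝ² with the L_p norm. Let b > 0, let n ≥ 1, and let π and σ be curves in ℝ² with at most n vertices each, all of whose points lie in the closed L_p-ball of radius b centered at the origin. Let r := (5nb, 0), and let π' := r^{2n} ∘ π and σ' := r^{2n} ∘ σ be the curves obtained by prepending 2n copies of the point r to π and σ respectively. Then for every translation τ ∈ ℝ², d_DTW(π', σ' + τ) ≥ d_DTW(π, σ). -/
open Finset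

/-! ### Auxiliary material -/

def DtwStep (a b : ℕ × ℕ) : Prop :=
  b = (a.1 + 1, a.2) ∨ b = (a.1, a.2 + 1) ∨ b = (a.1 + 1, a.2 + 1)

theorem isTraversal_iff_chain' {n m : ℕ} {T : List (ℕ × ℕ)} :
    IsTraversal n m T ↔
      T.head? = some (1, 1) ∧ T.getLast? = some (n, m) ∧ T.Chain' DtwStep := by
  unfold IsTraversal
  refine and_congr_right fun _ => and_congr_right fun _ => ?_
  rw [List.Chain', List.isChain_iff_getElem]
  constructor
  · intro h i hi
    have hi1 : i + 1 < T.length := by omega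
    have := h i hi1
    rw [List.getD_eq_getElem _ _ hi1, List.getD_eq_getElem _ _ (by omega)] at this
    simpa [DtwStep, List.get_eq_getElem] using this
  · intro h ℓ hℓ
    have := h ℓ (by omega)
    rw [List.getD_eq_getElem _ _ hℓ, List.getD_eq_getElem _ _ (by omega)]
    simpa [DtwStep, List.get_eq_getElem] using this

theorem dtwStep_le {a b : ℕ × ℕ} (h : DtwStep a b) :
    a.1 ≤ b.1 ∧ a.2 ≤ b.2 ∧ b.1 ≤ a.1 + 1 ∧ b.2 ≤ a.2 + 1 ∧ a.1 + a.2 + 1 ≤ b.1 + b.2 := by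
  rcases h with h | h | h <;> subst h <;> simp <;> omega

/-- every element is ≥ the head, componentwise -/
theorem ge_head {T : List (ℕ × ℕ)} (hc : T.Chain' DtwStep) :
    ∀ {a : ℕ × ℕ}, T.head? = some a → ∀ q ∈ T, a.1 ≤ q.1 ∧ a.2 ≤ q.2 := by
  induction T with
  | nil => intro a h; simp at h
  | cons x t ih =>
    intro a hh q hq
    simp only [List.head?_cons, Option.some.injEq] at hh
    subst hh
    rcases List.mem_cons.1 hq with rfl | hq
    · exact ⟨le_refl _, le_refl _⟩
    · match t, hq, hc, ih with
      | y :: t', hq, hc, ih =>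
        have hc' := List.isChain_cons_cons.1 hc
        have hstep := dtwStep_le hc'.1
        have := ih hc'.2 (a := y) rfl q hq
        omega

theorem le_last {T : List (ℕ × ℕ)} (hc : T.Chain' DtwStep) :
    ∀ {z : ℕ × ℕ}, T.getLast? = some z → ∀ q ∈ T, q.1 ≤ z.1 ∧ q.2 ≤ z.2 := by
  induction T with
  | nil => intro z h; simp at h
  | cons x t ih =>
    intro z hh q hq
    match t, hh, hq, hc, ih with
    | [], hh, hq, hc, ih =>
      simp only [List.getLast?_singleton, Option.some.injEq] at hh
      subst hh
      rcases List.mem_singleton.1 hq with rfl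
      exact ⟨le_refl _, le_refl _⟩
    | y :: t', hh, hq, hc, ih =>
      have hh' : (y :: t').getLast? = some z := by
        rw [← hh]; simp [List.getLast?_cons_cons]
      have hc' := List.isChain_cons_cons.1 hc
      rcases List.mem_cons.1 hq with rfl | hq
      · have h1 := dtwStep_le hc'.1
        have h2 := ih hc'.2 hh' y (by simp)
        omega
      · exact ih hc'.2 hh' q hq

/-- coordinate growth along a traversal starting at (1,1) -/
theorem coord_growth {T : List (ℕ × ℕ)} (hc : T.Chain' DtwStep)
    (hh : T.head? = some (1, 1)) :
    ∀ ℓ : ℕ, ∀ h : ℓ < T.length,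
      T[ℓ].1 ≤ ℓ + 1 ∧ T[ℓ].2 ≤ ℓ + 1 ∧ ℓ + 2 ≤ T[ℓ].1 + T[ℓ].2 := by
  intro ℓ
  induction ℓ with
  | zero =>
    intro h
    have : T[0] = (1, 1) := by
      cases T with
      | nil => simp at h
      | cons x t => simp at hh; simp [hh]
    simp [this]
  | succ k ih =>
    intro h
    have hk : k < T.length := by omega
    have hstep : DtwStep T[k] T[k + 1] := by
      have := List.isChain_iff_getElem.1 hc k (by omega)
      simpa [List.get_eq_getElem] using this
    have h1 := dtwStep_le hstep
    have h2 := ih hk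
    omega

/-- length bound for a traversal -/
theorem trav_length_le {n m : ℕ} {T : List (ℕ × ℕ)} (hc : T.Chain' DtwStep)
    (hh : T.head? = some (1, 1)) (hl : T.getLast? = some (n, m)) :
    T.length ≤ n + m - 1 ∧ T ≠ [] := by
  have hne : T ≠ [] := by rintro rfl; simp at hh
  have hlen : 0 < T.length := List.length_pos_iff.2 hne
  have hlast : T[T.length - 1] = (n, m) := by
    have := List.getLast?_eq_getLast hne
    rw [this] at hl
    simp only [Option.some.injEq] at hl
    rw [← hl, List.getLast_eq_getElem]
  have := coord_growth hc hh (T.length - 1) (by omega)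
  rw [hlast] at this
  refine ⟨by omega, hne⟩

theorem chain'_step_map_range' (f : ℕ → ℕ × ℕ) (hf : ∀ i, DtwStep (f i) (f (i + 1))) :
    ∀ (n s : ℕ), List.Chain' DtwStep ((List.range' s n).map f) := by
  intro n
  induction n with
  | zero => intro s; exact List.isChain_nil
  | succ m ih =>
    intro s
    rw [List.range'_succ, List.map_cons]
    cases m with
    | zero => exact List.isChain_singleton _
    | succ k =>
      refine List.isChain_cons.2 ⟨?_, ih (s + 1)⟩
      intro b hb
      rw [List.range'_succ, List.map_cons, List.head?_cons] at hb
      simp only [Option.mem_def, Option.some.injEq] at hb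
      subst hb
      exact hf s

theorem range'_eq_cons (n : ℕ) (hn : 1 ≤ n) :
    List.range' 1 n = 1 :: List.range' 2 (n - 1) := by
  cases n with
  | zero => omega
  | succ k => rw [List.range'_succ]; simp

theorem range'_eq_concat (s n : ℕ) (hn : 1 ≤ n) :
    List.range' s n = List.range' s (n - 1) ++ [s + n - 1] := by
  cases n with
  | zero => omega
  | succ k =>
    rw [List.range'_1_concat]
    simp only [Nat.add_sub_cancel]
    congr 2
    all_goals omega

theorem exists_trav (n m : ℕ) (hn : 1 ≤ n) (hm : 1 ≤ m) :
    ∃ T : List (ℕ × ℕ), T.head? = some (1, 1) ∧ T.getLast? = some (n, m) ∧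
      T.Chain' DtwStep ∧ T.length = n + m - 1 ∧
      ∀ q ∈ T, 1 ≤ q.1 ∧ q.1 ≤ n ∧ 1 ≤ q.2 ∧ q.2 ≤ m := by
  classical
  set L1 : List (ℕ × ℕ) := (List.range' 1 n).map (fun i => (i, 1)) with hL1
  set L2 : List (ℕ × ℕ) := (List.range' 2 (m - 1)).map (fun j => (n, j)) with hL2
  refine ⟨L1 ++ L2, ?_, ?_, ?_, ?_, ?_⟩
  · rw [hL1, range'_eq_cons n hn]
    simp
  · rcases Nat.lt_or_ge m 2 with hm2 | hm2
    · have hm1 : m = 1 := by omega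
      have hL2nil : L2 = [] := by rw [hL2]; simp [hm1]
      have h2 : (1 : ℕ) + n - 1 = n := by omega
      rw [hL2nil, List.append_nil, hL1, range'_eq_concat 1 n hn, h2, List.map_append]
      simp [hm1]
    · have h2 : (2 : ℕ) + (m - 1) - 1 = m := by omega
      have h3 : m - 1 - 1 = m - 2 := by omega
      rw [hL2, range'_eq_concat 2 (m - 1) (by omega), h2, h3, List.map_append,
        List.getLast?_append]
      simp
  · rw [List.Chain', List.isChain_append]
    refine ⟨chain'_step_map_range' _ (fun i => Or.inl rfl) _ _,
      chain'_step_map_range' _ (fun i => Or.inr (Or.inl rfl)) _ _, ?_⟩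
    intro x hx y hy
    have h2 : (1 : ℕ) + n - 1 = n := by omega
    rw [hL1, range'_eq_concat 1 n hn, h2, List.map_append] at hx
    rw [List.getLast?_append] at hx
    simp only [List.map_cons, List.map_nil, List.getLast?_singleton, Option.or_some, Option.some_or,
      Option.mem_def, Option.some.injEq] at hx
    subst hx
    have hm2 : 2 ≤ m := by
      by_contra h
      have : m - 1 = 0 := by omega
      rw [hL2, this] at hy
      simp at hy
    have h4 : List.range' 2 (m - 1) = 2 :: List.range' 3 (m - 2) := by
      have h1 : m - 1 = (m - 2) + 1 := by omega
      rw [h1, List.range'_succ]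
    rw [hL2, h4, List.map_cons, List.head?_cons] at hy
    simp only [Option.mem_def, Option.some.injEq] at hy
    subst hy
    exact Or.inr (Or.inl rfl)
  · simp [hL1, hL2]; omega
  · intro q hq
    rcases List.mem_append.1 hq with h | h
    · rw [hL1] at h
      rcases List.mem_map.1 h with ⟨i, hi, rfl⟩
      rcases List.mem_range'.1 hi with ⟨k, hk, rfl⟩
      simp; omega
    · rw [hL2] at h
      rcases List.mem_map.1 h with ⟨j, hj, rfl⟩
      rcases List.mem_range'.1 hj with ⟨k, hk, rfl⟩
      simp; omega

theorem single_le_sum' {l : List ℝ} (h0 : ∀ x ∈ l, 0 ≤ x) :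
    ∀ x ∈ l, x ≤ l.sum := by
  induction l with
  | nil => simp
  | cons y t ih =>
    intro x hx
    rcases List.mem_cons.1 hx with rfl | hx
    · rw [List.sum_cons]
      have : 0 ≤ t.sum := List.sum_nonneg (fun z hz => h0 z (by simp [hz]))
      linarith
    · rw [List.sum_cons]
      have := ih (fun z hz => h0 z (by simp [hz])) x hx
      have h1 : 0 ≤ y := h0 y (by simp)
      linarith

theorem sum_map_sub_const {α : Type*} (l : List α) (u : α → ℝ) (c : ℝ) :
    (l.map (fun x => u x - c)).sum = (l.map u).sum - l.length * c := by
  induction l with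
  | nil => simp
  | cons y t ih =>
    simp only [List.map_cons, List.sum_cons, List.length_cons, ih]
    push_cast
    ring

theorem chain'_map_sub (k : ℕ) :
    ∀ (l : List (ℕ × ℕ)), l.Chain' DtwStep → (∀ q ∈ l, k < q.1 ∧ k < q.2) →
      (l.map (fun q => (q.1 - k, q.2 - k))).Chain' DtwStep := by
  intro l
  induction l with
  | nil => intro _ _; exact List.isChain_nil
  | cons x t ih =>
    intro hc hb
    match t, hc, hb, ih with
    | [], _, _, _ => exact List.isChain_singleton _
    | y :: t', hc, hb, ih =>
      rw [List.map_cons, List.map_cons]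
      have hc' := List.isChain_cons_cons.1 hc
      refine List.isChain_cons_cons.2 ⟨?_, ?_⟩
      · have hx := hb x (by simp)
        have hy := hb y (by simp)
        rcases hc'.1 with h | h | h
        · left; rw [h]; simp [Prod.ext_iff]; omega
        · right; left; rw [h]; simp [Prod.ext_iff]; omega
        · right; right; rw [h]; simp [Prod.ext_iff]; omega
      · simpa [List.Chain'] using ih hc'.2 (fun q hq => hb q (by simp at hq ⊢; tauto))

theorem dtw_set_bddBelow {E : Type*} [NormedAddCommGroup E] (n m : ℕ) (π σ : ℕ → E) :
    BddBelow {c : ℝ | ∃ T : List (ℕ × ℕ), IsTraversal n m T ∧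
      (T.map fun p => ‖π p.1 - σ p.2‖).sum = c} := by
  refine ⟨0, fun c hc => ?_⟩
  obtain ⟨T, _, rfl⟩ := hc
  exact List.sum_nonneg (by simp only [List.mem_map]; rintro x ⟨q, _, rfl⟩; positivity)

theorem dtw_le_of_mem {E : Type*} [NormedAddCommGroup E] {n m : ℕ} {π σ : ℕ → E}
    {T : List (ℕ × ℕ)} (hT : IsTraversal n m T) :
    dtw n m π σ ≤ (T.map fun p => ‖π p.1 - σ p.2‖).sum :=
  csInf_le (dtw_set_bddBelow n m π σ) ⟨T, hT, rfl⟩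

open scoped ENNReal

theorem r_norm (p : ℝ≥0∞) [Fact (1 ≤ p)] (hp : p ≠ ⊤) (c : ℝ) (hc : 0 ≤ c) :
    ‖(WithLp.equiv p (Fin 2 → ℝ)).symm ![c, 0]‖ = c := by
  have hp0 : 0 < p.toReal := by
    apply ENNReal.toReal_pos _ hp
    have h1 : (1 : ℝ≥0∞) ≤ p := Fact.out
    intro h; rw [h] at h1; exact (by simp at h1)
  rw [PiLp.norm_eq_sum hp0]
  have : ∀ i : Fin 2, ‖(WithLp.equiv p (Fin 2 → ℝ)).symm ![c, 0] i‖ ^ p.toReal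
      = ‖(![c, 0] : Fin 2 → ℝ) i‖ ^ p.toReal := by
    intro i; rfl
  rw [Finset.sum_congr rfl (fun i _ => this i), Fin.sum_univ_two]
  simp only [Matrix.cons_val_zero, Matrix.cons_val_one, Matrix.head_cons, norm_zero]
  rw [Real.zero_rpow (ne_of_gt hp0), add_zero, Real.norm_of_nonneg hc,
    ← Real.rpow_mul hc, mul_one_div_cancel (ne_of_gt hp0), Real.rpow_one]

/-- an upper bound on the DTW distance of two short curves with bounded points -/
theorem dtw_ub {E : Type*} [NormedAddCommGroup E] {n m : ℕ} (hn : 1 ≤ n) (hm : 1 ≤ m)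
    {π σ : ℕ → E} {b : ℝ}
    (hπ : ∀ i ∈ Finset.Icc 1 n, ‖π i‖ ≤ b) (hσ : ∀ j ∈ Finset.Icc 1 m, ‖σ j‖ ≤ b) :
    dtw n m π σ ≤ (n + m - 1 : ℕ) * (2 * b) := by
  obtain ⟨T, hh, hl, hc, hlen, hmem⟩ := exists_trav n m hn hm
  refine le_trans (dtw_le_of_mem (isTraversal_iff_chain'.2 ⟨hh, hl, hc⟩)) ?_
  have h1 : (T.map fun q => ‖π q.1 - σ q.2‖).sum
      ≤ (T.map fun q => ‖π q.1 - σ q.2‖).length • (2 * b) := by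
    apply List.sum_le_card_nsmul
    simp only [List.mem_map]
    rintro x ⟨q, hq, rfl⟩
    obtain ⟨h1, h2, h3, h4⟩ := hmem q hq
    have := norm_sub_le (π q.1) (σ q.2)
    have hπ' := hπ q.1 (Finset.mem_Icc.2 ⟨h1, h2⟩)
    have hσ' := hσ q.2 (Finset.mem_Icc.2 ⟨h3, h4⟩)
    linarith
  rw [List.length_map, hlen] at h1
  simpa [nsmul_eq_mul] using h1

/-- Let `π, σ` be curves in `ℝ²` (with the `L_p` norm, `1 ≤ p < ∞`) with `n₁, n₂ ≤ n`
vertices, all points lying in the closed ball of radius `b` around the origin, and let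
`π', σ'` be obtained from `π, σ` by prepending `2n` copies of the point `r = (5nb, 0)`.
Then for every translation `τ`, `d_DTW(π', σ' + τ) ≥ d_DTW(π, σ)`. -/
theorem dtw_prepended_ge (p : ℝ≥0∞) [Fact (1 ≤ p)] (hp : p ≠ ⊤)
    (b : ℝ) (hb : 0 < b) (n n₁ n₂ : ℕ) (hn : 1 ≤ n)
    (hn₁ : 1 ≤ n₁) (hn₁n : n₁ ≤ n) (hn₂ : 1 ≤ n₂) (hn₂n : n₂ ≤ n)
    (π σ : ℕ → PiLp p fun _ : Fin 2 => ℝ)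
    (hπ : ∀ i ∈ Finset.Icc 1 n₁, ‖π i‖ ≤ b) (hσ : ∀ j ∈ Finset.Icc 1 n₂, ‖σ j‖ ≤ b)
    (r : PiLp p fun _ : Fin 2 => ℝ)
    (hr : r = (WithLp.equiv p (Fin 2 → ℝ)).symm ![5 * n * b, 0])
    (π' σ' : ℕ → PiLp p fun _ : Fin 2 => ℝ)
    (hπ' : ∀ i, π' i = if i ≤ 2 * n then r else π (i - 2 * n))
    (hσ' : ∀ j, σ' j = if j ≤ 2 * n then r else σ (j - 2 * n)) :
    ∀ τ : PiLp p fun _ : Fin 2 => ℝ,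
      dtw n₁ n₂ π σ ≤ dtw (2 * n + n₁) (2 * n + n₂) π' (fun j => σ' j + τ) := by
  intro τ
  classical
  have hτ : (0 : ℝ) ≤ ‖τ‖ := norm_nonneg τ
  have hrn : ‖r‖ = 5 * n * b := by
    rw [hr]; exact r_norm p hp _ (by positivity)
  have hub : dtw n₁ n₂ π σ ≤ (n₁ + n₂ - 1 : ℕ) * (2 * b) := dtw_ub hn₁ hn₂ hπ hσ
  have hub' : ((n₁ + n₂ - 1 : ℕ) : ℝ) * (2 * b) ≤ 5 * n * b - b := by
    have h1 : (n₁ + n₂ - 1 : ℕ) ≤ 2 * n - 1 := by omega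
    have h2 : ((n₁ + n₂ - 1 : ℕ) : ℝ) ≤ ((2 * n - 1 : ℕ) : ℝ) := by exact_mod_cast h1
    have h3 : ((2 * n - 1 : ℕ) : ℝ) = 2 * (n : ℝ) - 1 := by
      rw [Nat.cast_sub (by omega)]; push_cast; ring
    have h4 : (1 : ℝ) ≤ (n : ℝ) := by exact_mod_cast hn
    nlinarith [hb.le]
  rw [show dtw (2 * n + n₁) (2 * n + n₂) π' (fun j => σ' j + τ)
      = sInf {c : ℝ | ∃ T : List (ℕ × ℕ), IsTraversal (2 * n + n₁) (2 * n + n₂) T ∧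
        (T.map fun q => ‖π' q.1 - (σ' q.2 + τ)‖).sum = c} from rfl]
  apply le_csInf
  · obtain ⟨T, hh, hl, hc, -, -⟩ := exists_trav (2 * n + n₁) (2 * n + n₂) (by omega) (by omega)
    exact ⟨_, T, isTraversal_iff_chain'.2 ⟨hh, hl, hc⟩, rfl⟩
  rintro c ⟨T, hT, rfl⟩
  rw [isTraversal_iff_chain'] at hT
  obtain ⟨hh, hl, hc⟩ := hT
  set f : ℕ × ℕ → ℝ := fun q => ‖π' q.1 - (σ' q.2 + τ)‖ with hf
  have hfnn : ∀ q : ℕ × ℕ, 0 ≤ f q := fun q => norm_nonneg _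
  by_cases hA : ∃ q ∈ T, (q.1 ≤ 2 * n ∧ 2 * n < q.2) ∨ (2 * n < q.1 ∧ q.2 ≤ 2 * n)
  · -- Case A : some pair matches a padding point with a curve point
    obtain ⟨q, hqT, hq⟩ := hA
    obtain ⟨rest, rfl⟩ : ∃ rest, T = (1, 1) :: rest := by
      cases T with
      | nil => simp at hh
      | cons x t =>
        simp only [List.head?_cons, Option.some.injEq] at hh
        exact ⟨t, by rw [hh]⟩
    have hq1 : q ∈ rest := by
      rcases List.mem_cons.1 hqT with rfl | h
      · exfalso; omega
      · exact h
    have hf11 : f (1, 1) = ‖τ‖ := by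
      show ‖π' 1 - (σ' 1 + τ)‖ = ‖τ‖
      rw [hπ' 1, hσ' 1, if_pos (by omega), if_pos (by omega)]
      have : r - (r + τ) = -τ := by abel
      rw [this, norm_neg]
    have hfq : 5 * n * b - b - ‖τ‖ ≤ f q := by
      have hbnd := le_last hc hl q hqT
      rcases hq with ⟨h1, h2⟩ | ⟨h1, h2⟩
      · have hmem : q.2 - 2 * n ∈ Finset.Icc 1 n₂ := by
          simp only [Finset.mem_Icc]; omega
        have hσb := hσ _ hmem
        have hfeq : f q = ‖r - (σ (q.2 - 2 * n) + τ)‖ := by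
          show ‖π' q.1 - (σ' q.2 + τ)‖ = _
          rw [hπ' q.1, hσ' q.2, if_pos h1, if_neg (by omega)]
        have e1 := norm_sub_norm_le r (σ (q.2 - 2 * n) + τ)
        have e2 := norm_add_le (σ (q.2 - 2 * n)) τ
        rw [hrn] at e1
        rw [hfeq]
        linarith
      · have hmem : q.1 - 2 * n ∈ Finset.Icc 1 n₁ := by
          simp only [Finset.mem_Icc]; omega
        have hπb := hπ _ hmem
        have hfeq : f q = ‖π (q.1 - 2 * n) - (r + τ)‖ := by
          show ‖π' q.1 - (σ' q.2 + τ)‖ = _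
          rw [hπ' q.1, hσ' q.2, if_neg (by omega), if_pos h2]
        have e1 := norm_sub_norm_le (r + τ) (π (q.1 - 2 * n))
        rw [norm_sub_rev] at e1
        have e2 := norm_sub_norm_le r (-τ)
        rw [norm_neg, sub_neg_eq_add] at e2
        rw [hrn] at e2
        rw [hfeq]
        linarith
    have hsum : f (1, 1) + f q ≤ (((1, 1) :: rest).map f).sum := by
      rw [List.map_cons, List.sum_cons]
      have : f q ≤ (rest.map f).sum := by
        apply single_le_sum'
        · simp only [List.mem_map]; rintro x ⟨q', -, rfl⟩; exact hfnn q'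
        · exact List.mem_map.2 ⟨q, hq1, rfl⟩
      linarith
    have : 5 * n * b - b ≤ (((1, 1) :: rest).map f).sum := by
      rw [hf11] at hsum; linarith
    linarith
  · -- Case B : the traversal crosses the padding diagonally
    push_neg at hA
    have hB : ∀ q ∈ T, (q.1 ≤ 2 * n ↔ q.2 ≤ 2 * n) := by
      intro q hq
      have := hA q hq
      omega
    set A := T.takeWhile (fun q => decide (q.1 ≤ 2 * n)) with hA_def
    set B := T.dropWhile (fun q => decide (q.1 ≤ 2 * n)) with hB_def
    have hTAB : T = A ++ B := List.takeWhile_append_dropWhile.symm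
    have hmemA : ∀ q ∈ A, q.1 ≤ 2 * n := by
      intro q hq
      have := List.mem_takeWhile_imp hq
      simpa using this
    have hz : ((2 * n + n₁ : ℕ), (2 * n + n₂ : ℕ)) ∈ T := List.mem_of_getLast? hl
    have hBne : B ≠ [] := by
      intro h
      rw [h, List.append_nil] at hTAB
      have := hmemA _ (hTAB ▸ hz)
      omega
    have hheadB : B.head? = some (B.head hBne) := List.head?_eq_head hBne
    have hB1 : 2 * n < (B.head hBne).1 := by
      have := List.head_dropWhile_not (fun q : ℕ × ℕ => decide (q.1 ≤ 2 * n)) (l := T)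
        (by rw [← hB_def]; exact hBne)
      simp only [decide_eq_false_iff_not, not_le] at this
      exact this
    have hheadBmem : B.head hBne ∈ T := hTAB ▸ List.mem_append_right A (List.head_mem hBne)
    have hB2 : 2 * n < (B.head hBne).2 := by
      have := hB _ hheadBmem
      omega
    have hcB : B.Chain' DtwStep := hc.suffix (List.dropWhile_suffix _)
    have hAne : A ≠ [] := by
      intro h
      rw [h, List.nil_append] at hTAB
      rw [hTAB, hheadB] at hh
      have : B.head hBne = (1, 1) := by injection hh
      rw [this] at hB1
      simp at hB1
      omega
    have hlink : DtwStep (A.getLast hAne) (B.head hBne) := by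
      rw [hTAB, List.Chain', List.isChain_append] at hc
      exact hc.2.2 _ (List.getLast_mem_getLast? hAne) _ hheadB
    have hlastA1 : (A.getLast hAne).1 ≤ 2 * n := hmemA _ (List.getLast_mem hAne)
    have hlastAmem : A.getLast hAne ∈ T := hTAB ▸ List.mem_append_left B (List.getLast_mem hAne)
    have hlastA2 : (A.getLast hAne).2 ≤ 2 * n := by
      have := hB _ hlastAmem
      omega
    have hx0 : B.head hBne = (2 * n + 1, 2 * n + 1) := by
      rcases hlink with h | h | h <;> rw [h] at hB1 hB2 ⊢ <;>
        simp only [Prod.mk.injEq] at hB1 hB2 ⊢ <;> omega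
    have hAlen : 2 * n ≤ A.length := by
      have hlt : A.length < T.length := by
        conv_rhs => rw [hTAB]
        rw [List.length_append]
        have := List.length_pos_iff.2 hBne
        omega
      have hTA : T[A.length] = B.head hBne := by
        have h1 : T[A.length]'hlt = (A ++ B)[A.length]'(by rw [← hTAB]; exact hlt) := by
          congr 1 <;> rw [hTAB]
        rw [h1, List.getElem_append_right (le_refl A.length)]
        simp only [Nat.sub_self]
        exact List.getElem_zero _
      have := coord_growth hc hh A.length hlt
      rw [hTA, hx0] at this
      omega
    have hmemA2 : ∀ q ∈ A, q.2 ≤ 2 * n := by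
      intro q hq
      have h1 := hmemA q hq
      have := hB q (hTAB ▸ List.mem_append_left B hq)
      omega
    have hsumA : (A.map f).sum = A.length * ‖τ‖ := by
      have hconst : ∀ x ∈ A.map f, x = ‖τ‖ := by
        rintro x hx
        rcases List.mem_map.1 hx with ⟨q, hq, rfl⟩
        show ‖π' q.1 - (σ' q.2 + τ)‖ = ‖τ‖
        rw [hπ' q.1, hσ' q.2, if_pos (hmemA q hq), if_pos (hmemA2 q hq)]
        have : r - (r + τ) = -τ := by abel
        rw [this, norm_neg]
      rw [List.sum_eq_card_nsmul _ _ hconst, List.length_map]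
      simp [nsmul_eq_mul]
    have hmemB : ∀ q ∈ B, 2 * n < q.1 ∧ 2 * n < q.2 ∧ q.1 ≤ 2 * n + n₁ ∧ q.2 ≤ 2 * n + n₂ := by
      intro q hq
      have h1 := ge_head hcB hheadB q hq
      rw [hx0] at h1
      have h2 := le_last hc hl q (hTAB ▸ List.mem_append_right A hq)
      exact ⟨by omega, by omega, h2.1, h2.2⟩
    set S := B.map (fun q => (q.1 - 2 * n, q.2 - 2 * n)) with hS
    have hSh : S.head? = some (1, 1) := by
      rw [hS, List.head?_map, hheadB, hx0]
      simp
    have hBl : B.getLast? = some ((2 * n + n₁ : ℕ), (2 * n + n₂ : ℕ)) := by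
      rw [hTAB, List.getLast?_append] at hl
      rw [List.getLast?_eq_getLast hBne] at hl ⊢
      simp only [Option.or_some, Option.some_or, Option.some.injEq] at hl
      rw [hl]
    have hSl : S.getLast? = some (n₁, n₂) := by
      rw [hS, List.getLast?_map, hBl]
      simp
    have hSc : S.Chain' DtwStep :=
      chain'_map_sub _ _ hcB (fun q hq => ⟨(hmemB q hq).1, (hmemB q hq).2.1⟩)
    have hdtwS : dtw n₁ n₂ π σ ≤ (S.map fun q => ‖π q.1 - σ q.2‖).sum :=
      dtw_le_of_mem (isTraversal_iff_chain'.2 ⟨hSh, hSl, hSc⟩)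
    have hSlen : S.length ≤ n₁ + n₂ - 1 := (trav_length_le hSc hSh hSl).1
    have hBlen : B.length = S.length := by rw [hS, List.length_map]
    have hsumB : (S.map fun q => ‖π q.1 - σ q.2‖).sum - B.length * ‖τ‖ ≤ (B.map f).sum := by
      have hpt : ∀ q ∈ B,
          (fun q : ℕ × ℕ => ‖π (q.1 - 2 * n) - σ (q.2 - 2 * n)‖ - ‖τ‖) q ≤ f q := by
        intro q hq
        obtain ⟨h1, h2, -, -⟩ := hmemB q hq
        show ‖π (q.1 - 2 * n) - σ (q.2 - 2 * n)‖ - ‖τ‖ ≤ ‖π' q.1 - (σ' q.2 + τ)‖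
        rw [hπ' q.1, hσ' q.2, if_neg (by omega), if_neg (by omega)]
        have e : π (q.1 - 2 * n) - (σ (q.2 - 2 * n) + τ)
            = (π (q.1 - 2 * n) - σ (q.2 - 2 * n)) - τ := by abel
        rw [e]
        exact norm_sub_norm_le _ _
      have h1 := List.sum_le_sum hpt
      rw [sum_map_sub_const B (fun q : ℕ × ℕ => ‖π (q.1 - 2 * n) - σ (q.2 - 2 * n)‖) ‖τ‖] at h1
      have h2 : (S.map fun q => ‖π q.1 - σ q.2‖).sum
          = (B.map fun q : ℕ × ℕ => ‖π (q.1 - 2 * n) - σ (q.2 - 2 * n)‖).sum := by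
        rw [hS, List.map_map]
        rfl
      rw [h2]
      exact h1
    have hsplit : (T.map f).sum = (A.map f).sum + (B.map f).sum := by
      conv_lhs => rw [hTAB]
      rw [List.map_append, List.sum_append]
    have hlen2 : (B.length : ℝ) ≤ (A.length : ℝ) := by
      have : B.length ≤ A.length := by omega
      exact_mod_cast this
    have htau : (B.length : ℝ) * ‖τ‖ ≤ (A.length : ℝ) * ‖τ‖ :=
      mul_le_mul_of_nonneg_right hlen2 hτ
    calc dtw n₁ n₂ π σ ≤ (S.map fun q => ‖π q.1 - σ q.2‖).sum := hdtwS
      _ ≤ (A.length : ℝ) * ‖τ‖ + ((S.map fun q => ‖π q.1 - σ q.2‖).sum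
            - (B.length : ℝ) * ‖τ‖) := by linarith
      _ ≤ (A.map f).sum + (B.map f).sum := by rw [hsumA]; linarith
      _ = (T.map f).sum := hsplit.symm
end

section
/- Fix p ∈ [1,∞) and equip ℝ² with the L_p norm. Let b > 0, let n ≥ 1, and let π and σ be curves in ℝ² with at most n vertices each, all of whose points lie in the closed L_p-ball of radius b centered at the origin. Let r := (5nb, 0), and let π' := r^{2n} ∘ π and σ' := r^{2n} ∘ σ be the curves obtained by prepending 2n copies of the point r to π and σ respectively. Then d_DTW^T(π', σ') = d_DTW(π, σ). -/
open Finset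

open scoped ENNReal

/-- single step of a traversal -/
def Step (a b : ℕ × ℕ) : Prop :=
  b = (a.1 + 1, a.2) ∨ b = (a.1, a.2 + 1) ∨ b = (a.1 + 1, a.2 + 1)

lemma isTraversal_iff {n m : ℕ} {T : List (ℕ × ℕ)} :
    IsTraversal n m T ↔
      T.head? = some (1, 1) ∧ T.getLast? = some (n, m) ∧ List.IsChain Step T := by
  unfold IsTraversal
  refine and_congr_right fun _ => and_congr_right fun _ => ?_
  rw [List.isChain_iff_getElem]
  constructor
  · intro h i hi
    have h2 : i + 1 < T.length := by omega
    have := h i h2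
    rw [List.getD_eq_getElem?_getD, List.getD_eq_getElem?_getD,
      List.getElem?_eq_getElem h2, List.getElem?_eq_getElem (by omega)] at this
    simpa [Step, List.get_eq_getElem] using this
  · intro h ℓ hℓ
    have := h ℓ (by omega)
    rw [List.getD_eq_getElem?_getD, List.getD_eq_getElem?_getD,
      List.getElem?_eq_getElem hℓ, List.getElem?_eq_getElem (by omega)]
    simpa [Step, List.get_eq_getElem] using this

lemma step_mono {a b : ℕ × ℕ} (h : Step a b) :
    a.1 ≤ b.1 ∧ a.2 ≤ b.2 ∧ b.1 ≤ a.1 + 1 ∧ b.2 ≤ a.2 + 1 ∧ a.1 + a.2 < b.1 + b.2 := by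
  rcases h with h | h | h <;> subst h <;> simp <;> omega

lemma chain'_head_mono : ∀ {l : List (ℕ × ℕ)} {a : ℕ × ℕ}, List.IsChain Step (a :: l) →
    ∀ p ∈ a :: l, a.1 ≤ p.1 ∧ a.2 ≤ p.2 := by
  intro l
  induction l with
  | nil => intro a _ p hp; simp only [List.mem_singleton] at hp; subst hp; exact ⟨le_rfl, le_rfl⟩
  | cons b l ih =>
    intro a h p hp
    rw [List.isChain_cons_cons] at h
    rcases List.mem_cons.1 hp with rfl | hp
    · exact ⟨le_rfl, le_rfl⟩
    · have h1 := step_mono h.1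
      have h2 := ih h.2 p hp
      omega

lemma chain'_last_mono : ∀ {l : List (ℕ × ℕ)}, List.IsChain Step l →
    ∀ p ∈ l, ∀ q, l.getLast? = some q → p.1 ≤ q.1 ∧ p.2 ≤ q.2 := by
  intro l
  induction l with
  | nil => simp
  | cons a l ih =>
    intro h p hp q hq
    cases l with
    | nil =>
      simp only [List.getLast?_singleton, Option.some_inj] at hq
      simp only [List.mem_singleton] at hp
      subst hq; subst hp; exact ⟨le_rfl, le_rfl⟩
    | cons b l' =>
      rw [List.getLast?_cons_cons] at hq
      rcases List.mem_cons.1 hp with rfl | hp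
      · have hqm : q ∈ b :: l' := List.mem_of_mem_getLast? hq
        exact chain'_head_mono h q (List.mem_cons_of_mem _ hqm)
      · exact ih (List.isChain_cons_cons.1 h).2 p hp q hq

/-- discrete intermediate value theorem along a chain whose value increases by at most 1 -/
lemma chain'_ivt {α : Type*} (g : α → ℕ) : ∀ {l : List α},
    List.IsChain (fun x y => g y ≤ g x + 1) l →
    ∀ a ∈ l.head?, ∀ y ∈ l, ∀ v, g a ≤ v → v ≤ g y → ∃ x ∈ l, g x = v := by
  intro l
  induction l with
  | nil => simp
  | cons a l ih =>
    intro hc a' ha' y hy v hav hvy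
    simp only [List.head?_cons, Option.mem_def, Option.some_inj] at ha'
    subst ha'
    rcases eq_or_lt_of_le hav with h | h
    · exact ⟨a, List.mem_cons_self, h⟩
    · have hya : y ≠ a := by intro hya; subst hya; omega
      have hyl : y ∈ l := (List.mem_cons.1 hy).resolve_left hya
      cases l with
      | nil => simp at hyl
      | cons b l' =>
        rw [List.isChain_cons_cons] at hc
        have hb : g b ≤ g a + 1 := hc.1
        obtain ⟨x, hx, hxv⟩ := ih hc.2 b (by simp) y hyl v (by omega) hvy
        exact ⟨x, List.mem_cons_of_mem _ hx, hxv⟩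

/-- length bound along strictly increasing chain -/
lemma chain'_lt_length {α : Type*} (g : α → ℕ) : ∀ {l : List α},
    List.IsChain (fun x y => g x < g y) l →
    ∀ a ∈ l.head?, ∀ q ∈ l.getLast?, l.length + g a ≤ g q + 1 := by
  intro l
  induction l with
  | nil => simp
  | cons a l ih =>
    intro hc a' ha' q hq
    simp only [List.head?_cons, Option.mem_def, Option.some_inj] at ha'
    subst ha'
    cases l with
    | nil =>
      simp only [List.getLast?_singleton, Option.mem_def, Option.some_inj] at hq
      subst hq; simp; omega
    | cons b l' =>
      rw [List.isChain_cons_cons] at hc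
      rw [List.getLast?_cons_cons] at hq
      have := ih hc.2 b (by simp) q hq
      have := hc.1
      simp only [List.length_cons] at *
      omega

lemma sum_map_filter_add {α : Type*} (l : List α) (pr : α → Bool) (f : α → ℝ) :
    ((l.filter pr).map f).sum + ((l.filter (fun x => !(pr x))).map f).sum = (l.map f).sum := by
  induction l with
  | nil => simp
  | cons a l ih =>
    by_cases h : pr a <;> simp [List.filter_cons, h] <;> linarith

lemma le_sum_map {α : Type*} (l : List α) (f : α → ℝ) (M : ℝ)
    (h : ∀ x ∈ l, M ≤ f x) (hM : 0 ≤ M) :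
    (l.length : ℝ) * M ≤ (l.map f).sum := by
  induction l with
  | nil => simp
  | cons a l ih =>
    have h1 := h a (List.mem_cons_self)
    have h2 := ih (fun x hx => h x (List.mem_cons_of_mem _ hx))
    simp only [List.map_cons, List.sum_cons, List.length_cons]
    push_cast
    linarith

lemma sum_map_le {α : Type*} (l : List α) (f : α → ℝ) (M : ℝ)
    (h : ∀ x ∈ l, f x ≤ M) :
    (l.map f).sum ≤ (l.length : ℝ) * M := by
  induction l with
  | nil => simp
  | cons a l ih =>
    have h1 := h a (List.mem_cons_self)
    have h2 := ih (fun x hx => h x (List.mem_cons_of_mem _ hx))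
    simp only [List.map_cons, List.sum_cons, List.length_cons]
    push_cast
    linarith

lemma sum_map_add_const {α : Type*} (l : List α) (g : α → ℝ) (c : ℝ) :
    (l.map (fun x => g x + c)).sum = (l.map g).sum + (l.length : ℝ) * c := by
  induction l with
  | nil => simp
  | cons a l ih =>
    simp only [List.map_cons, List.sum_cons, List.length_cons]
    push_cast
    linarith

lemma sum_map_nonneg {α : Type*} (l : List α) (f : α → ℝ) (h : ∀ x ∈ l, 0 ≤ f x) :
    0 ≤ (l.map f).sum :=
  List.sum_nonneg (fun x hx => by
    obtain ⟨y, hy, rfl⟩ := List.mem_map.1 hx; exact h y hy)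

lemma card_le_length {α : Type*} (l : List α) (g : α → ℕ) (V : Finset ℕ)
    (h : ∀ v ∈ V, ∃ x ∈ l, g x = v) : V.card ≤ l.length := by
  have hsub : V ⊆ (l.map g).toFinset := by
    intro v hv
    obtain ⟨x, hx, rfl⟩ := h v hv
    rw [List.mem_toFinset, List.mem_map]
    exact ⟨x, hx, rfl⟩
  calc V.card ≤ (l.map g).toFinset.card := Finset.card_le_card hsub
    _ ≤ (l.map g).length := (l.map g).toFinset_card_le
    _ = l.length := List.length_map g

/-- existence of a staircase traversal -/
lemma stair_ex : ∀ (k n m : ℕ), n + m ≤ k → 1 ≤ n → 1 ≤ m →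
    ∃ T : List (ℕ × ℕ), T.head? = some (1, 1) ∧ T.getLast? = some (n, m) ∧
      List.IsChain Step T ∧ T.length = max n m ∧
      ∀ q ∈ T, 1 ≤ q.1 ∧ q.1 ≤ n ∧ 1 ≤ q.2 ∧ q.2 ≤ m := by
  intro k
  induction k with
  | zero => intro n m h hn hm; omega
  | succ k ih =>
    intro n m hk hn hm
    by_cases h11 : n = 1 ∧ m = 1
    · refine ⟨[(1, 1)], by simp, by simp [h11.1, h11.2], by simp, by simp; omega, by simp; omega⟩
    · -- choose predecessor
      obtain ⟨n', m', hn', hm', hnm', hstep, hmax⟩ :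
          ∃ n' m', 1 ≤ n' ∧ 1 ≤ m' ∧ n' + m' ≤ k ∧ Step (n', m') (n, m) ∧
            max n' m' + 1 = max n m := by
        rcases lt_trichotomy n m with h | h | h
        · refine ⟨n, m - 1, hn, by omega, by omega, ?_, by omega⟩
          right; left; simp; omega
        · refine ⟨n - 1, m - 1, by omega, by omega, by omega, ?_, by omega⟩
          right; right; simp; omega
        · refine ⟨n - 1, m, by omega, hm, by omega, ?_, by omega⟩
          left; simp; omega
      obtain ⟨T, hh, hl, hc, hlen, hmem⟩ := ih n' m' hnm' hn' hm'
      have hTne : T ≠ [] := by intro h; rw [h] at hh; simp at hh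
      refine ⟨T ++ [(n, m)], ?_, ?_, ?_, ?_, ?_⟩
      · rwa [List.head?_append_of_ne_nil _ hTne]
      · rw [List.getLast?_append_of_ne_nil _ (by simp)]; simp
      · refine List.isChain_append.2 ⟨hc, List.isChain_singleton _, ?_⟩
        intro x hx y hy
        rw [hl] at hx
        simp only [Option.mem_def, Option.some_inj, List.head?_cons] at hx hy
        subst hx; subst hy; exact hstep
      · simp [hlen]; omega
      · intro q hq
        rcases List.mem_append.1 hq with hq | hq
        · have := hmem q hq
          rcases hstep with h | h | h <;> simp at h <;> omega
        · simp at hq; subst hq; simp; omega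

/-- gluing a traversal from a prefix U and a (possibly empty) continuation V -/
lemma glue_traversal {U V : List (ℕ × ℕ)} {n m : ℕ} {ab : ℕ × ℕ}
    (hUh : U.head? = some (1, 1)) (hUl : U.getLast? = some ab) (hUc : List.IsChain Step U)
    (hVc : List.IsChain Step V)
    (hconn : ∀ v ∈ V.head?, Step ab v)
    (hVnil : V = [] → ab = (n, m)) (hVl : ∀ q, V.getLast? = some q → q = (n, m)) :
    IsTraversal n m (U ++ V) := by
  have hUne : U ≠ [] := by intro h; rw [h] at hUh; simp at hUh
  rw [isTraversal_iff]
  refine ⟨by rwa [List.head?_append_of_ne_nil _ hUne], ?_, ?_⟩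
  · rcases eq_or_ne V [] with rfl | hVne
    · rw [List.append_nil, hUl, hVnil rfl]
    · rw [List.getLast?_append_of_ne_nil _ hVne]
      obtain ⟨q, hq⟩ := List.getLast?_isSome.2 hVne |> Option.isSome_iff_exists.1
      rw [hq, hVl q hq]
  · refine List.isChain_append.2 ⟨hUc, hVc, ?_⟩
    intro x hx y hy
    rw [hUl] at hx
    simp only [Option.mem_def, Option.some_inj] at hx
    subst hx
    exact hconn y hy

lemma dtw_le {E : Type*} [NormedAddCommGroup E] {n m : ℕ} {π σ : ℕ → E}
    {T : List (ℕ × ℕ)} (h : IsTraversal n m T) :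
    dtw n m π σ ≤ (T.map fun p => ‖π p.1 - σ p.2‖).sum := by
  apply csInf_le
  · exact ⟨0, fun c ⟨T', _, hc⟩ => hc ▸ sum_map_nonneg _ _ (fun x _ => norm_nonneg _)⟩
  · exact ⟨T, h, rfl⟩

lemma le_dtw {E : Type*} [NormedAddCommGroup E] {n m : ℕ} {π σ : ℕ → E} {c : ℝ}
    (hn : 1 ≤ n) (hm : 1 ≤ m)
    (h : ∀ T, IsTraversal n m T → c ≤ (T.map fun p => ‖π p.1 - σ p.2‖).sum) :
    c ≤ dtw n m π σ := by
  apply le_csInf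
  · obtain ⟨T, h1, h2, h3, _, _⟩ := stair_ex (n + m) n m le_rfl hn hm
    exact ⟨_, T, isTraversal_iff.2 ⟨h1, h2, h3⟩, rfl⟩
  · rintro c' ⟨T, hT, rfl⟩
    exact h T hT

lemma dtw_nonneg {E : Type*} [NormedAddCommGroup E] {n m : ℕ} {π σ : ℕ → E}
    (hn : 1 ≤ n) (hm : 1 ≤ m) : 0 ≤ dtw n m π σ :=
  le_dtw hn hm fun T _ => sum_map_nonneg _ _ (fun x _ => norm_nonneg _)

lemma traversal_mem_bounds {n m : ℕ} {T : List (ℕ × ℕ)} (h : IsTraversal n m T) :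
    ∀ q ∈ T, 1 ≤ q.1 ∧ 1 ≤ q.2 ∧ q.1 ≤ n ∧ q.2 ≤ m := by
  rw [isTraversal_iff] at h
  obtain ⟨hh, hl, hc⟩ := h
  intro q hq
  have hup := chain'_last_mono hc q hq _ hl
  cases T with
  | nil => simp at hq
  | cons a T' =>
    simp only [List.head?_cons, Option.some_inj] at hh
    subst hh
    have hlow := chain'_head_mono hc q hq
    exact ⟨hlow.1, hlow.2, hup.1, hup.2⟩

lemma step_shift_up (d : ℕ) {a b : ℕ × ℕ} (h : Step a b) :
    Step (a.1 + d, a.2 + d) (b.1 + d, b.2 + d) := by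
  rcases h with h | h | h <;> subst h
  · left; simp [Prod.ext_iff]; omega
  · right; left; simp [Prod.ext_iff]; omega
  · right; right; simp [Prod.ext_iff]; omega

section main
open scoped ENNReal

variable (p : ℝ≥0∞) [Fact (1 ≤ p)]
    (b : ℝ) (hb : 0 < b) (n n₁ n₂ : ℕ) (hn : 1 ≤ n)
    (hn₁ : 1 ≤ n₁) (hn₁n : n₁ ≤ n) (hn₂ : 1 ≤ n₂) (hn₂n : n₂ ≤ n)
    (π σ : ℕ → PiLp p fun _ : Fin 2 => ℝ)
    (hπ : ∀ i ∈ Finset.Icc 1 n₁, ‖π i‖ ≤ b) (hσ : ∀ j ∈ Finset.Icc 1 n₂, ‖σ j‖ ≤ b)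
    (r : PiLp p fun _ : Fin 2 => ℝ)
    (π' σ' : ℕ → PiLp p fun _ : Fin 2 => ℝ)
    (hπ' : ∀ i, π' i = if i ≤ 2 * n then r else π (i - 2 * n))
    (hσ' : ∀ j, σ' j = if j ≤ 2 * n then r else σ (j - 2 * n))

include hn hn₁ hn₂ hπ' hσ' in
lemma dtw_upper : dtw (2 * n + n₁) (2 * n + n₂) π' σ' ≤ dtw n₁ n₂ π σ := by
  apply le_csInf
  · obtain ⟨T, h1, h2, h3, _, _⟩ := stair_ex (n₁ + n₂) n₁ n₂ le_rfl hn₁ hn₂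
    exact ⟨_, T, isTraversal_iff.2 ⟨h1, h2, h3⟩, rfl⟩
  rintro c ⟨T, hT, rfl⟩
  obtain ⟨U, hUh, hUl, hUc, hUlen, hUmem⟩ :=
    stair_ex (2 * n + 2 * n) (2 * n) (2 * n) le_rfl (by omega) (by omega)
  have hTmem := traversal_mem_bounds hT
  rw [isTraversal_iff] at hT
  obtain ⟨hTh, hTl, hTc⟩ := hT
  set V : List (ℕ × ℕ) := T.map (fun q => (q.1 + 2 * n, q.2 + 2 * n)) with hV
  have hglue : IsTraversal (2 * n + n₁) (2 * n + n₂) (U ++ V) := by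
    refine glue_traversal hUh hUl hUc ?_ ?_ ?_ ?_
    · rw [List.isChain_map]
      exact hTc.imp (fun a b h => step_shift_up (2 * n) h)
    · intro v hv
      rw [hV, List.head?_map, hTh] at hv
      simp only [Option.mem_def, Option.map_some, Option.some_inj] at hv
      subst hv
      right; right
      simp [Prod.ext_iff]; omega
    · intro hVnil
      rw [hV, List.map_eq_nil_iff] at hVnil
      rw [hVnil] at hTh; simp at hTh
    · intro q hq
      rw [hV, List.getLast?_map, hTl] at hq
      simp only [Option.map_some, Option.some_inj] at hq
      subst hq
      simp [Prod.ext_iff]; omega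
  refine le_trans (dtw_le hglue) ?_
  rw [List.map_append, List.sum_append]
  have hU0 : ((U.map fun q => ‖π' q.1 - σ' q.2‖)).sum = 0 := by
    apply List.sum_eq_zero
    intro x hx
    obtain ⟨q, hq, rfl⟩ := List.mem_map.1 hx
    obtain ⟨_, h1, _, h2⟩ := hUmem q hq
    rw [hπ' q.1, hσ' q.2, if_pos h1, if_pos h2, sub_self, norm_zero]
  have hVsum : ((V.map fun q => ‖π' q.1 - σ' q.2‖)).sum
      = (T.map fun q => ‖π q.1 - σ q.2‖).sum := by
    rw [hV, List.map_map]
    congr 1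
    apply List.map_congr_left
    intro q hq
    obtain ⟨h1, h2, _, _⟩ := hTmem q hq
    simp only [Function.comp]
    rw [hπ' (q.1 + 2 * n), hσ' (q.2 + 2 * n), if_neg (by omega), if_neg (by omega)]
    have e1 : q.1 + 2 * n - 2 * n = q.1 := by omega
    have e2 : q.2 + 2 * n - 2 * n = q.2 := by omega
    rw [e1, e2]
  rw [hU0, hVsum, zero_add]

end main

lemma step_shift_down (d : ℕ) {a b : ℕ × ℕ} (hd : d < a.1) (hd2 : d < a.2) (h : Step a b) :
    Step (a.1 - d, a.2 - d) (b.1 - d, b.2 - d) := by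
  rcases h with h | h | h <;> subst h
  · left; simp [Prod.ext_iff] <;> omega
  · right; left; simp [Prod.ext_iff] <;> omega
  · right; right; simp [Prod.ext_iff] <;> omega

lemma chain'_imp_of_mem {α : Type*} {R R' : α → α → Prop} : ∀ {l : List α},
    (∀ a ∈ l, ∀ b ∈ l, R a b → R' a b) → List.IsChain R l → List.IsChain R' l := by
  intro l
  induction l with
  | nil => intro _ _; simp
  | cons a l ih =>
    intro h hc
    rw [List.isChain_cons] at hc ⊢
    refine ⟨fun y hy => h a (by simp) y (List.mem_cons_of_mem _ (List.mem_of_mem_head? hy))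
      (hc.1 y hy), ih (fun x hx y hy => h x (List.mem_cons_of_mem _ hx)
        y (List.mem_cons_of_mem _ hy)) hc.2⟩

section mainlower
open scoped ENNReal

variable (p : ℝ≥0∞) [Fact (1 ≤ p)]
    (b : ℝ) (hb : 0 < b) (n n₁ n₂ : ℕ) (hn : 1 ≤ n)
    (hn₁ : 1 ≤ n₁) (hn₁n : n₁ ≤ n) (hn₂ : 1 ≤ n₂) (hn₂n : n₂ ≤ n)
    (π σ : ℕ → PiLp p fun _ : Fin 2 => ℝ)
    (hπ : ∀ i ∈ Finset.Icc 1 n₁, ‖π i‖ ≤ b) (hσ : ∀ j ∈ Finset.Icc 1 n₂, ‖σ j‖ ≤ b)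
    (r : PiLp p fun _ : Fin 2 => ℝ)
    (π' σ' : ℕ → PiLp p fun _ : Fin 2 => ℝ)
    (hπ' : ∀ i, π' i = if i ≤ 2 * n then r else π (i - 2 * n))
    (hσ' : ∀ j, σ' j = if j ≤ 2 * n then r else σ (j - 2 * n))

include hb hn hn₁ hn₁n hn₂ hn₂n hπ hσ hπ' hσ' in
lemma dtw_lower (hrn : ‖r‖ = 5 * n * b) (τ : PiLp p fun _ : Fin 2 => ℝ) :
    dtw n₁ n₂ π σ ≤ dtw (2 * n + n₁) (2 * n + n₂) π' (fun j => σ' j + τ) := by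
  apply le_dtw (by omega) (by omega)
  intro T hT
  show dtw n₁ n₂ π σ ≤ (T.map fun q => ‖π' q.1 - (σ' q.2 + τ)‖).sum
  set f : ℕ × ℕ → ℝ := fun q => ‖π' q.1 - (σ' q.2 + τ)‖ with hf
  have hTmem := traversal_mem_bounds hT
  rw [isTraversal_iff] at hT
  obtain ⟨hTh, hTl, hTc⟩ := hT
  have hlastmem : ((2 * n + n₁, 2 * n + n₂) : ℕ × ℕ) ∈ T :=
    List.mem_of_mem_getLast? (Option.mem_def.2 hTl)
  -- basic norm bound on π, σ values
  have hπb : ∀ i, 1 ≤ i → i ≤ n₁ → ‖π i‖ ≤ b := fun i h1 h2 =>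
    hπ i (Finset.mem_Icc.2 ⟨h1, h2⟩)
  have hσb : ∀ j, 1 ≤ j → j ≤ n₂ → ‖σ j‖ ≤ b := fun j h1 h2 =>
    hσ j (Finset.mem_Icc.2 ⟨h1, h2⟩)
  -- values of f on the three kinds of pairs
  have hfrr : ∀ q ∈ T, q.1 ≤ 2 * n → q.2 ≤ 2 * n → f q = ‖τ‖ := by
    intro q _ h1 h2
    rw [hf]
    simp only
    rw [hπ' q.1, hσ' q.2, if_pos h1, if_pos h2, sub_add_eq_sub_sub, sub_self, zero_sub, norm_neg]
  have hfmx : ∀ q ∈ T, ¬(q.1 ≤ 2 * n ∧ q.2 ≤ 2 * n) → (q.1 ≤ 2 * n ∨ q.2 ≤ 2 * n) →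
      5 * n * b - b - ‖τ‖ ≤ f q := by
    intro q hq hrr hor
    have hbd := hTmem q hq
    rw [hf]; simp only
    rcases hor with h1 | h2
    · have h2 : ¬(q.2 ≤ 2 * n) := fun h => hrr ⟨h1, h⟩
      rw [hπ' q.1, hσ' q.2, if_pos h1, if_neg h2]
      have hσj : ‖σ (q.2 - 2 * n)‖ ≤ b := hσb _ (by omega) (by omega)
      have e : r - (σ (q.2 - 2 * n) + τ) + σ (q.2 - 2 * n) + τ = r := by abel
      have h3 := norm_add_le (r - (σ (q.2 - 2 * n) + τ) + σ (q.2 - 2 * n)) τ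
      have h4 := norm_add_le (r - (σ (q.2 - 2 * n) + τ)) (σ (q.2 - 2 * n))
      rw [e] at h3
      rw [hrn] at h3; linarith
    · have h1 : ¬(q.1 ≤ 2 * n) := fun h => hrr ⟨h, h2⟩
      rw [hπ' q.1, hσ' q.2, if_neg h1, if_pos h2]
      have hπi : ‖π (q.1 - 2 * n)‖ ≤ b := hπb _ (by omega) (by omega)
      have e : π (q.1 - 2 * n) - (π (q.1 - 2 * n) - (r + τ)) - τ = r := by abel
      have h3 := norm_sub_le (π (q.1 - 2 * n) - (π (q.1 - 2 * n) - (r + τ))) τ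
      have h4 := norm_sub_le (π (q.1 - 2 * n)) (π (q.1 - 2 * n) - (r + τ))
      rw [e] at h3
      rw [hrn] at h3; linarith
  have hfss : ∀ q ∈ T, ¬(q.1 ≤ 2 * n) → ¬(q.2 ≤ 2 * n) →
      ‖π (q.1 - 2 * n) - σ (q.2 - 2 * n)‖ ≤ f q + ‖τ‖ := by
    intro q hq h1 h2
    rw [hf]; simp only
    rw [hπ' q.1, hσ' q.2, if_neg h1, if_neg h2]
    have e : π (q.1 - 2 * n) - (σ (q.2 - 2 * n) + τ) + τ = π (q.1 - 2 * n) - σ (q.2 - 2 * n) := by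
      abel
    have h3 := norm_add_le (π (q.1 - 2 * n) - (σ (q.2 - 2 * n) + τ)) τ
    rw [e] at h3
    linarith
  -- count of (r,r)-pairs
  set rrB : ℕ × ℕ → Bool := fun q => decide (q.1 ≤ 2 * n ∧ q.2 ≤ 2 * n) with hrrB
  have hcountrr : 2 * n ≤ (T.filter rrB).length := by
    have hcard : (Finset.Icc 1 (2 * n)).card = 2 * n := by rw [Nat.card_Icc]; omega
    rw [← hcard]
    apply card_le_length _ (fun q => max q.1 q.2)
    intro v hv
    rw [Finset.mem_Icc] at hv
    have hchain : List.IsChain (fun x y : ℕ × ℕ => max y.1 y.2 ≤ max x.1 x.2 + 1) T :=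
      chain'_imp_of_mem (fun a _ b _ h => by have := step_mono h; omega) hTc
    obtain ⟨x, hx, hxv⟩ := chain'_ivt _ hchain (1, 1) (Option.mem_def.2 hTh)
      (2 * n + n₁, 2 * n + n₂) hlastmem v (by simp; omega) (by simp; omega)
    refine ⟨x, List.mem_filter.2 ⟨hx, ?_⟩, hxv⟩
    rw [hrrB]; simp; omega
  -- the goal, with the sum split at the crossing point
  by_cases hτ2b : ‖τ‖ ≤ 2 * b
  · -- small translation
    set predB : ℕ × ℕ → Bool := fun q => decide (q.1 ≤ 2 * n ∨ q.2 ≤ 2 * n) with hpredB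
    set S := T.dropWhile predB with hSdef
    set P := T.takeWhile predB with hPdef
    have hPS : P ++ S = T := List.takeWhile_append_dropWhile
    have hPmem : ∀ q ∈ P, q.1 ≤ 2 * n ∨ q.2 ≤ 2 * n := by
      intro q hq
      have := List.mem_takeWhile_imp hq
      rw [hpredB] at this; simpa using this
    have hSne : S ≠ [] := by
      intro h
      have hTP : T = P := by rw [← hPS, h, List.append_nil]
      have := hPmem _ (hTP ▸ hlastmem)
      omega
    set s₀ := S.head hSne with hs₀def
    have hs₀ : S.head? = some s₀ := List.head?_eq_head hSne
    have hs₀S : s₀ ∈ S := List.mem_of_mem_head? (Option.mem_def.2 hs₀)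
    have hs₀T : s₀ ∈ T := by rw [← hPS]; exact List.mem_append_right _ hs₀S
    have hs₀big : 2 * n < s₀.1 ∧ 2 * n < s₀.2 := by
      have h0 := List.head?_dropWhile_not predB T
      rw [← hSdef, hs₀] at h0
      simp only [hpredB, decide_eq_false_iff_not, not_or, not_le] at h0
      exact h0
    have hSchain : List.IsChain Step S := by
      have h1 := hTc; rw [← hPS] at h1; exact h1.right_of_append
    have hSmono : ∀ q ∈ S, s₀.1 ≤ q.1 ∧ s₀.2 ≤ q.2 := by
      have h2 : s₀ :: S.tail = S := by rw [hs₀def]; exact List.cons_head_tail hSne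
      intro q hq
      apply chain'_head_mono (l := S.tail) (a := s₀)
      · rw [h2]; exact hSchain
      · rw [h2]; exact hq
    have hSlast : S.getLast? = some (2 * n + n₁, 2 * n + n₂) := by
      have h1 := hTl; rw [← hPS, List.getLast?_append_of_ne_nil _ hSne] at h1; exact h1
    have hs₀ub := hTmem s₀ hs₀T
    have hPne : P ≠ [] := by
      intro h
      have hST : S = T := by rw [← hPS, h, List.nil_append]
      rw [hST, hTh] at hs₀
      have : (1, 1) = s₀ := Option.some_inj.1 hs₀
      rw [← this] at hs₀big
      omega
    obtain ⟨q₀, hq₀⟩ : ∃ q₀, P.getLast? = some q₀ := ⟨P.getLast hPne, List.getLast?_eq_getLast hPne⟩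
    have hq₀P : q₀ ∈ P := List.mem_of_mem_getLast? (Option.mem_def.2 hq₀)
    have hstep : Step q₀ s₀ := by
      have h1 := hTc; rw [← hPS] at h1
      exact (List.isChain_append.1 h1).2.2 q₀ (Option.mem_def.2 hq₀) s₀ (Option.mem_def.2 hs₀)
    have hq₀or := hPmem q₀ hq₀P
    have hcross : s₀.1 = 2 * n + 1 ∨ s₀.2 = 2 * n + 1 := by
      have := step_mono hstep; omega
    set K := s₀.1 + s₀.2 - (4 * n + 2) with hK
    -- mixed pair count
    set mxB : ℕ × ℕ → Bool :=
      fun q => decide (¬(q.1 ≤ 2 * n ∧ q.2 ≤ 2 * n) ∧ (q.1 ≤ 2 * n ∨ q.2 ≤ 2 * n)) with hmxB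
    have hmxmem : ∀ x ∈ T, 2 * n < x.2 → x.2 < s₀.2 → x.1 ≤ 2 * n := by
      intro x hx h1 h2
      have hx' : x ∈ P ++ S := by rw [hPS]; exact hx
      rcases List.mem_append.1 hx' with hxP | hxS
      · have := hPmem x hxP; omega
      · have := hSmono x hxS; omega
    have hmxmem' : ∀ x ∈ T, 2 * n < x.1 → x.1 < s₀.1 → x.2 ≤ 2 * n := by
      intro x hx h1 h2
      have hx' : x ∈ P ++ S := by rw [hPS]; exact hx
      rcases List.mem_append.1 hx' with hxP | hxS
      · have := hPmem x hxP; omega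
      · have := hSmono x hxS; omega
    have hcountmx : K ≤ (T.filter mxB).length := by
      rcases hcross with hc | hc
      · have hcard : (Finset.Icc (2 * n + 1) (s₀.2 - 1)).card = K := by
          rw [Nat.card_Icc]; omega
        rw [← hcard]
        apply card_le_length _ (fun q : ℕ × ℕ => q.2)
        intro v hv
        rw [Finset.mem_Icc] at hv
        have hchain : List.IsChain (fun x y : ℕ × ℕ => y.2 ≤ x.2 + 1) T :=
          chain'_imp_of_mem (fun a _ b _ h => by have := step_mono h; omega) hTc
        obtain ⟨x, hx, hxv⟩ := chain'_ivt _ hchain (1, 1) (Option.mem_def.2 hTh)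
          s₀ hs₀T v (by show (1:ℕ) ≤ v; omega) (by show v ≤ s₀.2; omega)
        have hx1 : x.1 ≤ 2 * n := hmxmem x hx (by omega) (by omega)
        refine ⟨x, List.mem_filter.2 ⟨hx, ?_⟩, hxv⟩
        rw [hmxB]; simp; omega
      · have hcard : (Finset.Icc (2 * n + 1) (s₀.1 - 1)).card = K := by
          rw [Nat.card_Icc]; omega
        rw [← hcard]
        apply card_le_length _ (fun q : ℕ × ℕ => q.1)
        intro v hv
        rw [Finset.mem_Icc] at hv
        have hchain : List.IsChain (fun x y : ℕ × ℕ => y.1 ≤ x.1 + 1) T :=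
          chain'_imp_of_mem (fun a _ b _ h => by have := step_mono h; omega) hTc
        obtain ⟨x, hx, hxv⟩ := chain'_ivt _ hchain (1, 1) (Option.mem_def.2 hTh)
          s₀ hs₀T v (by show (1:ℕ) ≤ v; omega) (by show v ≤ s₀.1; omega)
        have hx2 : x.2 ≤ 2 * n := hmxmem' x hx (by omega) (by omega)
        refine ⟨x, List.mem_filter.2 ⟨hx, ?_⟩, hxv⟩
        rw [hmxB]; simp; omega
    -- shifted suffix
    set sh : ℕ × ℕ → ℕ × ℕ := fun q => (q.1 - 2 * n, q.2 - 2 * n) with hsh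
    have hshs₀ : sh s₀ = (s₀.1 - 2 * n, s₀.2 - 2 * n) := by rw [hsh]
    have hS'chain : List.IsChain Step (S.map sh) := by
      rw [List.isChain_map]
      apply chain'_imp_of_mem ?_ hSchain
      intro x hx y hy hsxy
      have hxb := hSmono x hx
      have := step_shift_down (2 * n) (by omega) (by omega) hsxy
      rw [hsh]
      exact this
    have hS'last : (S.map sh).getLast? = some (n₁, n₂) := by
      rw [List.getLast?_map, hSlast, hsh]
      simp only [Option.map_some]
      congr 1
      simp [Prod.ext_iff] <;> omega
    have hmapS : S.map sh = sh s₀ :: S.tail.map sh := by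
      have h2 : s₀ :: S.tail = S := by rw [hs₀def]; exact List.cons_head_tail hSne
      conv_lhs => rw [← h2]
      rw [List.map_cons]
    -- staircase to the entry point of the suffix
    obtain ⟨U, hUh, hUl, hUc, hUlen, hUmem⟩ := stair_ex ((s₀.1 - 2 * n) + (s₀.2 - 2 * n))
      (s₀.1 - 2 * n) (s₀.2 - 2 * n) le_rfl (by omega) (by omega)
    have hUne : U ≠ [] := by intro h; rw [h] at hUh; simp at hUh
    have hT₂ : IsTraversal n₁ n₂ (U ++ S.tail.map sh) := by
      refine glue_traversal hUh hUl hUc ?_ ?_ ?_ ?_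
      · rw [hmapS] at hS'chain; exact (List.isChain_cons.1 hS'chain).2
      · intro v hv
        rw [hmapS] at hS'chain
        have := (List.isChain_cons.1 hS'chain).1 v hv
        rwa [hshs₀] at this
      · intro hnil
        rw [hmapS, hnil] at hS'last
        simp only [List.getLast?_singleton, Option.some_inj] at hS'last
        rw [← hshs₀, hS'last]
      · intro q hq
        rw [hmapS] at hS'last
        cases htl : S.tail.map sh with
        | nil => rw [htl] at hq; simp at hq
        | cons bb tl2 =>
          rw [htl] at hS'last hq
          rw [List.getLast?_cons_cons] at hS'last
          rw [hq] at hS'last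
          exact Option.some_inj.1 hS'last
    -- cost comparison
    have hcost1 : dtw n₁ n₂ π σ ≤
        (((U ++ S.tail.map sh)).map (fun q => ‖π q.1 - σ q.2‖)).sum := dtw_le hT₂
    set g : ℕ × ℕ → ℝ := fun q => ‖π q.1 - σ q.2‖ with hg
    have hgb : ∀ q : ℕ × ℕ, 1 ≤ q.1 → q.1 ≤ n₁ → 1 ≤ q.2 → q.2 ≤ n₂ → g q ≤ 2 * b := by
      intro q a1 a2 a3 a4
      have := hπb q.1 a1 a2
      have := hσb q.2 a3 a4
      have := norm_sub_le (π q.1) (σ q.2)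
      rw [hg]; simp only; linarith
    have hUsum : (U.map g).sum ≤ (K : ℝ) * (2 * b) + g (sh s₀) := by
      have hUeq : U.dropLast ++ [U.getLast hUne] = U := List.dropLast_append_getLast hUne
      have hUlast : U.getLast hUne = sh s₀ := by
        have h1 := List.getLast?_eq_getLast hUne
        rw [h1] at hUl
        rw [Option.some_inj.1 hUl, hshs₀]
      have hlenD : (U.dropLast.length : ℝ) = K := by
        rw [List.length_dropLast, hUlen]
        have he : (s₀.1 - 2 * n) ⊔ (s₀.2 - 2 * n) - 1 = K := by
          rcases hcross with hc | hc
          · rw [Nat.max_eq_right (by omega)]; omega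
          · rw [Nat.max_eq_left (by omega)]; omega
        exact_mod_cast congrArg (Nat.cast : ℕ → ℝ) he
      calc (U.map g).sum = (U.dropLast.map g).sum + g (U.getLast hUne) := by
            conv_lhs => rw [← hUeq]
            rw [List.map_append, List.sum_append]; simp
        _ ≤ (U.dropLast.length : ℝ) * (2 * b) + g (sh s₀) := by
            rw [hUlast]
            refine add_le_add ?_ le_rfl
            apply sum_map_le
            intro q hq
            have hqU : q ∈ U := (List.dropLast_sublist U).subset hq
            obtain ⟨a1, a2, a3, a4⟩ := hUmem q hqU
            exact hgb q a1 (by omega) a3 (by omega)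
        _ = (K : ℝ) * (2 * b) + g (sh s₀) := by rw [hlenD]
    have hmapsum : ((S.map sh).map g).sum = g (sh s₀) + ((S.tail.map sh).map g).sum := by
      rw [hmapS, List.map_cons, List.sum_cons]
    have hSsum : ((S.map sh).map g).sum ≤ (S.map f).sum + (S.length : ℝ) * ‖τ‖ := by
      rw [List.map_map]
      have h1 : ∀ q ∈ S, (g ∘ sh) q ≤ f q + ‖τ‖ := by
        intro q hq
        have hqm := hSmono q hq
        have hqT : q ∈ T := by rw [← hPS]; exact List.mem_append_right _ hq
        have h2 := hfss q hqT (by omega) (by omega)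
        rw [hg, hsh]
        simp only [Function.comp]
        exact h2
      calc (S.map (g ∘ sh)).sum ≤ (S.map (fun q => f q + ‖τ‖)).sum := List.sum_le_sum h1
        _ = (S.map f).sum + (S.length : ℝ) * ‖τ‖ := sum_map_add_const S f ‖τ‖
    have hSlen : S.length + K ≤ n₁ + n₂ - 1 := by
      have hchain : List.IsChain (fun x y : ℕ × ℕ => x.1 + x.2 < y.1 + y.2) S :=
        chain'_imp_of_mem (fun a _ b _ h => (step_mono h).2.2.2.2) hSchain
      have h1 := chain'_lt_length _ hchain s₀ (Option.mem_def.2 hs₀) _ (Option.mem_def.2 hSlast)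
      have h2 : S.length + (s₀.1 + s₀.2) ≤ ((2 * n + n₁) + (2 * n + n₂)) + 1 := h1
      omega
    -- splitting the total cost
    have hsum_split : (T.map f).sum = (P.map f).sum + (S.map f).sum := by
      rw [← hPS, List.map_append, List.sum_append]
    have hPsplit := sum_map_filter_add P rrB f
    have hfilrr : T.filter rrB = P.filter rrB := by
      rw [← hPS, List.filter_append]
      have h1 : S.filter rrB = [] := List.filter_eq_nil_iff.2 (by
        intro q hq; have := hSmono q hq; rw [hrrB]; simp; omega)
      rw [h1, List.append_nil]
    have hfilmx : T.filter mxB = P.filter (fun x => !rrB x) := by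
      rw [← hPS, List.filter_append]
      have h1 : S.filter mxB = [] := List.filter_eq_nil_iff.2 (by
        intro q hq; have := hSmono q hq; rw [hmxB]; simp; omega)
      rw [h1, List.append_nil]
      apply List.filter_congr
      intro x hx
      have hx2 := hPmem x hx
      rw [hmxB, hrrB]
      simp only [← decide_not, decide_eq_decide]
      exact ⟨fun h => h.1, fun h => ⟨h, hx2⟩⟩
    have hrrsum : (2 * n : ℝ) * ‖τ‖ ≤ ((P.filter rrB).map f).sum := by
      rw [← hfilrr]
      refine le_trans ?_ (le_sum_map _ f ‖τ‖ ?_ (norm_nonneg _))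
      · exact mul_le_mul_of_nonneg_right (by exact_mod_cast hcountrr) (norm_nonneg _)
      · intro x hx
        have hx1 := List.mem_of_mem_filter hx
        have hx2 := (List.mem_filter.1 hx).2
        rw [hrrB] at hx2; simp at hx2
        rw [hfrr x hx1 hx2.1 hx2.2]
    have hcastn : (1 : ℝ) ≤ (n : ℝ) := by exact_mod_cast hn
    have hMpos : 0 ≤ 5 * (n : ℝ) * b - b - ‖τ‖ := by nlinarith
    have hmxsum : (K : ℝ) * (5 * n * b - b - ‖τ‖) ≤
        ((P.filter (fun x => !rrB x)).map f).sum := by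
      rw [← hfilmx]
      refine le_trans ?_ (le_sum_map _ f _ ?_ hMpos)
      · exact mul_le_mul_of_nonneg_right (by exact_mod_cast hcountmx) hMpos
      · intro x hx
        have hx1 := List.mem_of_mem_filter hx
        have hx2 : ¬(x.1 ≤ 2 * n ∧ x.2 ≤ 2 * n) ∧ (x.1 ≤ 2 * n ∨ x.2 ≤ 2 * n) := by
          have h9 := (List.mem_filter.1 hx).2
          rw [hmxB] at h9
          exact of_decide_eq_true h9
        exact hfmx x hx1 hx2.1 hx2.2
    -- final arithmetic
    have hcast1 : (S.length : ℝ) + (K : ℝ) ≤ (n₁ : ℝ) + n₂ - 1 := by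
      have h8 : ((S.length + K : ℕ) : ℝ) ≤ ((n₁ + n₂ - 1 : ℕ) : ℝ) := Nat.cast_le.2 hSlen
      push_cast [Nat.cast_sub (by omega : 1 ≤ n₁ + n₂)] at h8
      linarith
    have hcast2 : (n₁ : ℝ) + n₂ ≤ 2 * n := by
      have : ((n₁ + n₂ : ℕ) : ℝ) ≤ ((2 * n : ℕ) : ℝ) := Nat.cast_le.2 (by omega)
      push_cast at this; linarith
    have hK0 : (0 : ℝ) ≤ (K : ℝ) := Nat.cast_nonneg _
    have hprod1 : 0 ≤ (K : ℝ) * ((5 * n * b - b - ‖τ‖) - 2 * b) := by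
      have h9 : (0 : ℝ) ≤ ((n : ℝ) - 1) * b := mul_nonneg (by linarith only [hcastn]) hb.le
      have h10 : 0 ≤ (5 * (n : ℝ) * b - b - ‖τ‖) - 2 * b := by linarith only [h9, hτ2b, hb]
      exact mul_nonneg hK0 h10
    have h2nS : (S.length : ℝ) ≤ 2 * (n : ℝ) := by linarith only [hcast1, hcast2, hK0]
    have hprod2 : 0 ≤ ((2 * n : ℝ) - S.length) * ‖τ‖ :=
      mul_nonneg (by linarith only [h2nS]) (norm_nonneg _)
    have hdtw2 : dtw n₁ n₂ π σ ≤ (K : ℝ) * (2 * b) + (S.map f).sum + (S.length : ℝ) * ‖τ‖ := by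
      refine le_trans hcost1 ?_
      rw [List.map_append, List.sum_append]
      linarith only [hUsum, hmapsum, hSsum]
    have hSig : (2 * n : ℝ) * ‖τ‖ + (K : ℝ) * (5 * n * b - b - ‖τ‖) + (S.map f).sum ≤
        (T.map f).sum := by
      rw [hsum_split]; linarith only [hrrsum, hmxsum, hPsplit]
    linarith only [hprod1, hprod2, hdtw2, hSig]
  · -- large translation: the (r,r)-pairs alone cost more than 4nb
    push_neg at hτ2b
    -- upper bound for dtw
    obtain ⟨W, hWh, hWl, hWc, hWlen, hWmem⟩ := stair_ex (n₁ + n₂) n₁ n₂ le_rfl hn₁ hn₂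
    have hdtwub : dtw n₁ n₂ π σ ≤ 2 * n * b := by
      refine le_trans (dtw_le (isTraversal_iff.2 ⟨hWh, hWl, hWc⟩)) ?_
      refine le_trans (sum_map_le _ _ (2 * b) ?_) ?_
      · intro q hq
        obtain ⟨a1, a2, a3, a4⟩ := hWmem q hq
        have := hπb q.1 a1 a2
        have := hσb q.2 a3 a4
        have := norm_sub_le (π q.1) (σ q.2)
        linarith
      · rw [hWlen]
        have h5 : ((n₁ ⊔ n₂ : ℕ) : ℝ) ≤ (n : ℝ) := Nat.cast_le.2 (by omega)
        calc ((n₁ ⊔ n₂ : ℕ) : ℝ) * (2 * b) ≤ (n : ℝ) * (2 * b) :=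
              mul_le_mul_of_nonneg_right h5 (by linarith)
          _ = 2 * n * b := by ring
    have hsplit := sum_map_filter_add T rrB f
    have hnn2 : 0 ≤ ((T.filter fun x => !rrB x).map f).sum :=
      sum_map_nonneg _ _ (fun x _ => norm_nonneg _)
    have hrrval : ((T.filter rrB).map f).sum ≥ ((T.filter rrB).length : ℝ) * ‖τ‖ := by
      apply le_sum_map
      · intro x hx
        have hx1 := List.mem_of_mem_filter hx
        have hx2 := (List.mem_filter.1 hx).2
        rw [hrrB] at hx2; simp at hx2
        rw [hfrr x hx1 hx2.1 hx2.2]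
      · exact norm_nonneg _
    have hcast : (2 * n : ℝ) ≤ ((T.filter rrB).length : ℝ) := by exact_mod_cast hcountrr
    have h4nb : (2 * n : ℝ) * ‖τ‖ ≤ ((T.filter rrB).length : ℝ) * ‖τ‖ :=
      mul_le_mul_of_nonneg_right hcast (norm_nonneg _)
    have hnb : b ≤ (n : ℝ) * b := by
      have : (1 : ℝ) ≤ n := by exact_mod_cast hn
      nlinarith
    nlinarith [norm_nonneg τ]
end mainlower

/-- Let `π, σ` be curves in `ℝ²` (with the `L_p` norm, `1 ≤ p < ∞`) with `n₁, n₂ ≤ n`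
vertices, all points lying in the closed ball of radius `b` around the origin, and let
`π', σ'` be obtained from `π, σ` by prepending `2n` copies of the point `r = (5nb, 0)`.
Then DTW under translation of `π'` and `σ'` equals `d_DTW(π, σ)`. -/
theorem dtwT_prepended_eq (p : ℝ≥0∞) [Fact (1 ≤ p)] (hp : p ≠ ⊤)
    (b : ℝ) (hb : 0 < b) (n n₁ n₂ : ℕ) (hn : 1 ≤ n)
    (hn₁ : 1 ≤ n₁) (hn₁n : n₁ ≤ n) (hn₂ : 1 ≤ n₂) (hn₂n : n₂ ≤ n)
    (π σ : ℕ → PiLp p fun _ : Fin 2 => ℝ)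
    (hπ : ∀ i ∈ Finset.Icc 1 n₁, ‖π i‖ ≤ b) (hσ : ∀ j ∈ Finset.Icc 1 n₂, ‖σ j‖ ≤ b)
    (r : PiLp p fun _ : Fin 2 => ℝ)
    (hr : r = (WithLp.equiv p (Fin 2 → ℝ)).symm ![5 * n * b, 0])
    (π' σ' : ℕ → PiLp p fun _ : Fin 2 => ℝ)
    (hπ' : ∀ i, π' i = if i ≤ 2 * n then r else π (i - 2 * n))
    (hσ' : ∀ j, σ' j = if j ≤ 2 * n then r else σ (j - 2 * n)) :
    sInf {c : ℝ | ∃ τ : PiLp p fun _ : Fin 2 => ℝ,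
        dtw (2 * n + n₁) (2 * n + n₂) π' (fun j => σ' j + τ) = c} =
      dtw n₁ n₂ π σ := by
  have hrnorm : ‖r‖ = 5 * n * b := by
    have hv : (![5 * (n : ℝ) * b, 0] : Fin 2 → ℝ) = Pi.single 0 (5 * (n : ℝ) * b) := by
      funext i
      fin_cases i <;> simp [Pi.single, Function.update]
    rw [hr, hv, WithLp.equiv_symm_apply, PiLp.norm_toLp_single]
    rw [Real.norm_eq_abs, abs_of_nonneg]
    exact mul_nonneg (mul_nonneg (by norm_num) (Nat.cast_nonneg _)) hb.le
  have hlow : ∀ τ : PiLp p fun _ : Fin 2 => ℝ,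
      dtw n₁ n₂ π σ ≤ dtw (2 * n + n₁) (2 * n + n₂) π' (fun j => σ' j + τ) :=
    fun τ => dtw_lower p b hb n n₁ n₂ hn hn₁ hn₁n hn₂ hn₂n π σ hπ hσ r π' σ' hπ' hσ' hrnorm τ
  have hup : dtw (2 * n + n₁) (2 * n + n₂) π' σ' ≤ dtw n₁ n₂ π σ :=
    dtw_upper p n n₁ n₂ hn hn₁ hn₂ π σ r π' σ' hπ' hσ'
  have hσ'0 : (fun j => σ' j + (0 : PiLp p fun _ : Fin 2 => ℝ)) = σ' := by
    funext j; exact add_zero _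
  have heq : dtw (2 * n + n₁) (2 * n + n₂) π' σ' = dtw n₁ n₂ π σ := by
    refine le_antisymm hup ?_
    have := hlow 0
    rwa [hσ'0] at this
  apply le_antisymm
  · apply csInf_le
    · exact ⟨dtw n₁ n₂ π σ, fun c ⟨τ, hc⟩ => hc ▸ hlow τ⟩
    · exact ⟨0, by rw [hσ'0]; exact heq⟩
  · apply le_csInf
    · exact ⟨_, 0, rfl⟩
    · rintro c ⟨τ, rfl⟩
      exact hlow τ
end
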